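/- arXiv:1104.4868 — 6 statements merged into one kernel-verified Lean document; each statement's English description precedes it below -/
import Mathlib

section
/- Let A be a commutative ring with a derivation ∂ : A → A, let n ≥ 2, and let B = A[t]/(t^n). For μ, ν in A[t]/(t^{n-1}) with ν a unit, define the A-algebra endomorphism φ_{μ,ν} of B by φ_{μ,ν}(a) = Σ_{i=0}^{n-1} (1/i!) (μt)^i ∂^i(a) for a ∈ A and φ_{μ,ν}(t) = νt (extended multiplicatively). Then φ_{μ,ν} is a well-defined ring homomorphism of B (i.e. the formula is additive, multiplicative, sends 1 to 1, and respects t^n = 0). -/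
open Polynomial

/-- The truncated polynomial ring `A[t]/(t^m)`. -/
abbrev TruncP (A : Type) [CommRing A] (m : ℕ) : Type :=
  Polynomial A ⧸ Ideal.span {(Polynomial.X : Polynomial A) ^ m}

/-- The class of `t` in `A[t]/(t^m)`. -/
noncomputable def tv (A : Type) [CommRing A] (m : ℕ) : TruncP A m :=
  Ideal.Quotient.mk _ Polynomial.X

/-- `φ` is the endomorphism `φ_{μ,ν}` of `B = A[t]/(t^n)` determined by
`φ(a) = ∑_{i<n} (1/i!) (μ t)^i ∂^i(a)` for `a ∈ A` and `φ(t) = ν t`. -/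
def IsPhi (A : Type) [CommRing A] [Algebra ℚ A] (D : Derivation ℚ A A) (n : ℕ)
    (μ ν : TruncP A n) (φ : TruncP A n →+* TruncP A n) : Prop :=
  φ (tv A n) = ν * tv A n ∧
  ∀ a : A, φ (algebraMap A (TruncP A n) a) =
    ∑ i ∈ Finset.range n, (i.factorial : ℚ)⁻¹ •
      ((μ * tv A n) ^ i * algebraMap A (TruncP A n) ((⇑D)^[i] a))

section Aux
open Finset
variable {A : Type} [CommRing A] [Algebra ℚ A]

lemma D_iter_zero (D : Derivation ℚ A A) (k : ℕ) : (⇑D)^[k] (0 : A) = 0 :=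
  Function.iterate_fixed (map_zero D) k

lemma D_iter_mul (D : Derivation ℚ A A) (p q : A) (n : ℕ) :
    (⇑D)^[n] (p * q) =
      ∑ k ∈ range (n + 1), n.choose k • ((⇑D)^[n - k] p * (⇑D)^[k] q) := by
  induction n with
  | zero => simp [Finset.range]
  | succ n IH =>
    calc
      (⇑D)^[n + 1] (p * q) =
          D (∑ k ∈ range (n + 1),
              n.choose k • ((⇑D)^[n - k] p * (⇑D)^[k] q)) := by
        rw [Function.iterate_succ_apply', IH]
      _ = (∑ k ∈ range (n + 1),
            n.choose k • ((⇑D)^[n - k + 1] p * (⇑D)^[k] q)) +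
          ∑ k ∈ range (n + 1),
            n.choose k • ((⇑D)^[n - k] p * (⇑D)^[k + 1] q) := by
        rw [map_sum, ← sum_add_distrib]
        refine sum_congr rfl fun k _ => ?_
        rw [map_nsmul, Derivation.leibniz, smul_eq_mul, smul_eq_mul,
          ← Function.iterate_succ_apply' (⇑D), ← Function.iterate_succ_apply' (⇑D),
          smul_add, mul_comm ((⇑D)^[k] q), add_comm]
      _ = (∑ k ∈ range (n + 1),
                n.choose k.succ • ((⇑D)^[n - k] p * (⇑D)^[k + 1] q)) +
              1 • ((⇑D)^[n + 1] p * (⇑D)^[0] q) +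
            ∑ k ∈ range (n + 1), n.choose k • ((⇑D)^[n - k] p * (⇑D)^[k + 1] q) :=
        ?_
      _ = ((∑ k ∈ range (n + 1), n.choose k • ((⇑D)^[n - k] p * (⇑D)^[k + 1] q)) +
              ∑ k ∈ range (n + 1),
                n.choose k.succ • ((⇑D)^[n - k] p * (⇑D)^[k + 1] q)) +
            1 • ((⇑D)^[n + 1] p * (⇑D)^[0] q) := by
        rw [add_comm, add_assoc]
      _ = (∑ i ∈ range (n + 1),
              (n + 1).choose (i + 1) • ((⇑D)^[n + 1 - (i + 1)] p * (⇑D)^[i + 1] q)) +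
            1 • ((⇑D)^[n + 1] p * (⇑D)^[0] q) := by
        simp_rw [Nat.choose_succ_succ, Nat.succ_sub_succ, add_smul, sum_add_distrib]
      _ = ∑ k ∈ range (n + 2),
            (n + 1).choose k • ((⇑D)^[n + 1 - k] p * (⇑D)^[k] q) := by
        rw [sum_range_succ' _ (n + 1), Nat.choose_zero_right, tsub_zero]
    congr
    refine (sum_range_succ' _ _).trans (congr_arg₂ (· + ·) ?_ ?_)
    · rw [sum_range_succ, Nat.choose_succ_self, zero_smul, add_zero]
      refine sum_congr rfl fun k hk => ?_
      rw [mem_range] at hk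
      congr
      omega
    · rw [Nat.choose_zero_right, tsub_zero]

lemma sum_tri {M : Type*} [AddCommMonoid M] (n : ℕ) (h : ℕ → ℕ → M)
    (hv : ∀ i j, n ≤ i + j → h i j = 0) :
    ∑ k ∈ range n, ∑ i ∈ range (k + 1), h (k - i) i =
      ∑ i ∈ range n, ∑ j ∈ range n, h i j := by
  classical
  rw [← Finset.sum_product']
  rw [← Finset.sum_filter_add_sum_filter_not (range n ×ˢ range n) (fun p => p.1 + p.2 < n)]
  have h2 : ∑ p ∈ (range n ×ˢ range n).filter (fun p => ¬ p.1 + p.2 < n),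
      h p.1 p.2 = 0 := by
    refine Finset.sum_eq_zero fun p hp => ?_
    rw [Finset.mem_filter] at hp
    exact hv p.1 p.2 (by omega)
  rw [h2, add_zero, Finset.sum_sigma']
  refine Finset.sum_nbij' (fun x => (x.1 - x.2, x.2)) (fun p => ⟨p.1 + p.2, p.2⟩)
    ?_ ?_ ?_ ?_ ?_
  · rintro ⟨k, i⟩ hx
    simp only [Finset.mem_sigma, mem_range] at hx
    simp only [Finset.mem_filter, Finset.mem_product, mem_range]
    omega
  · rintro ⟨i, j⟩ hp
    simp only [Finset.mem_filter, Finset.mem_product, mem_range] at hp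
    simp only [Finset.mem_sigma, mem_range]
    omega
  · rintro ⟨k, i⟩ hx
    simp only [Finset.mem_sigma, mem_range] at hx
    simp only [Sigma.mk.inj_iff]
    constructor
    · omega
    · exact heq_of_eq rfl
  · rintro ⟨i, j⟩ hp
    simp
  · rintro ⟨k, i⟩ hx
    rfl


lemma fact_inv_eq {i k : ℕ} (hik : i ≤ k) :
    ((k.factorial : ℚ))⁻¹ * (k.choose i : ℚ) =
      ((k - i).factorial : ℚ)⁻¹ * ((i.factorial : ℚ))⁻¹ := by
  have h := Nat.choose_mul_factorial_mul_factorial hik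
  have h1 : (k.factorial : ℚ) ≠ 0 := Nat.cast_ne_zero.mpr k.factorial_ne_zero
  have h2 : ((k - i).factorial : ℚ) ≠ 0 := Nat.cast_ne_zero.mpr (k - i).factorial_ne_zero
  have h3 : (i.factorial : ℚ) ≠ 0 := Nat.cast_ne_zero.mpr i.factorial_ne_zero
  have hq : (k.choose i : ℚ) * (i.factorial : ℚ) * ((k - i).factorial : ℚ)
      = (k.factorial : ℚ) := by exact_mod_cast congrArg (Nat.cast : ℕ → ℚ) h
  field_simp
  linear_combination hq

set_option maxHeartbeats 2000000 in
set_option synthInstance.maxHeartbeats 1000000 in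
noncomputable def Fmap (D : Derivation ℚ A A) (n : ℕ) (hn : 0 < n)
    (s : TruncP A n) (hs : s ^ n = 0) : A →+* TruncP A n where
  toFun a := ∑ i ∈ range n, (i.factorial : ℚ)⁻¹ •
      (s ^ i * algebraMap A (TruncP A n) ((⇑D)^[i] a))
  map_one' := by
    beta_reduce
    rw [Finset.sum_eq_single 0]
    · simp
    · intro i _ hne
      obtain ⟨j, rfl⟩ := Nat.exists_eq_succ_of_ne_zero hne
      rw [Function.iterate_succ_apply, Derivation.map_one_eq_zero, D_iter_zero]
      simp
    · intro h; exact absurd (Finset.mem_range.mpr hn) h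
  map_zero' := by simp [D_iter_zero]
  map_add' a b := by
    beta_reduce
    have : ∀ i, (⇑D)^[i] (a + b) = (⇑D)^[i] a + (⇑D)^[i] b := fun i => iterate_map_add D i a b
    simp only [this, map_add, mul_add, smul_add, Finset.sum_add_distrib]
  map_mul' a b := by
    beta_reduce
    have key : ∀ k ∈ range n,
        (k.factorial : ℚ)⁻¹ • (s ^ k * algebraMap A (TruncP A n) ((⇑D)^[k] (a * b))) =
        ∑ i ∈ range (k + 1),
          (((k - i).factorial : ℚ)⁻¹ * ((i.factorial : ℚ))⁻¹) •
            (s ^ ((k - i) + i) *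
              algebraMap A (TruncP A n) ((⇑D)^[k - i] a * (⇑D)^[i] b)) := by
      intro k _
      rw [D_iter_mul D a b k, map_sum, Finset.mul_sum, Finset.smul_sum]
      refine sum_congr rfl fun i hi => ?_
      have hik : i ≤ k := Nat.lt_succ_iff.mp (mem_range.mp hi)
      rw [map_nsmul, ← Nat.cast_smul_eq_nsmul ℚ, mul_smul_comm, smul_smul,
        fact_inv_eq hik, Nat.sub_add_cancel hik]
    calc ∑ k ∈ range n, (k.factorial : ℚ)⁻¹ •
            (s ^ k * algebraMap A (TruncP A n) ((⇑D)^[k] (a * b)))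
        = ∑ k ∈ range n, ∑ i ∈ range (k + 1),
            (((k - i).factorial : ℚ)⁻¹ * ((i.factorial : ℚ))⁻¹) •
              (s ^ ((k - i) + i) *
                algebraMap A (TruncP A n) ((⇑D)^[k - i] a * (⇑D)^[i] b)) :=
          sum_congr rfl key
      _ = ∑ i ∈ range n, ∑ j ∈ range n,
            (((i.factorial : ℚ))⁻¹ * ((j.factorial : ℚ))⁻¹) •
              (s ^ (i + j) *
                algebraMap A (TruncP A n) ((⇑D)^[i] a * (⇑D)^[j] b)) := by
          refine sum_tri n (fun i j => (((i.factorial : ℚ))⁻¹ * ((j.factorial : ℚ))⁻¹) •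
            (s ^ (i + j) * algebraMap A (TruncP A n) ((⇑D)^[i] a * (⇑D)^[j] b)))
            fun i j hij => ?_
          beta_reduce
          rw [pow_eq_zero_of_le hij hs, zero_mul, smul_zero]
      _ = (∑ i ∈ range n, (i.factorial : ℚ)⁻¹ •
              (s ^ i * algebraMap A (TruncP A n) ((⇑D)^[i] a))) *
            ∑ j ∈ range n, (j.factorial : ℚ)⁻¹ •
              (s ^ j * algebraMap A (TruncP A n) ((⇑D)^[j] b)) := by
          rw [Finset.sum_mul_sum]
          refine sum_congr rfl fun i _ => sum_congr rfl fun j _ => ?_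
          rw [smul_mul_smul_comm, map_mul, pow_add]
          ring_nf

end Aux

set_option maxHeartbeats 2000000 in
set_option synthInstance.maxHeartbeats 1000000 in
/-- the formula `φ_{μ,ν}` yields a well-defined ring homomorphism of
`B = A[t]/(t^n)`. -/
theorem phi_exists (A : Type) [CommRing A] [Algebra ℚ A] (D : Derivation ℚ A A)
    (n : ℕ) (hn : 2 ≤ n) (μ ν : TruncP A n) (hν : IsUnit ν) :
    ∃ φ : TruncP A n →+* TruncP A n, IsPhi A D n μ ν φ := by
  have htv : (tv A n) ^ n = 0 := by
    rw [tv, ← map_pow, Ideal.Quotient.eq_zero_iff_mem]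
    exact Ideal.subset_span rfl
  have hs : (μ * tv A n) ^ n = 0 := by rw [mul_pow, htv, mul_zero]
  have hn0 : 0 < n := by omega
  set F := Fmap D n hn0 (μ * tv A n) hs with hF
  have hker : ∀ p ∈ Ideal.span {(X : Polynomial A) ^ n},
      eval₂RingHom F (ν * tv A n) p = 0 := by
    intro p hp
    rw [Ideal.mem_span_singleton] at hp
    obtain ⟨c, rfl⟩ := hp
    rw [map_mul, map_pow, coe_eval₂RingHom, eval₂_X, mul_pow, htv, mul_zero, zero_mul]
  refine ⟨Ideal.Quotient.lift _ (eval₂RingHom F (ν * tv A n)) hker, ?_, ?_⟩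
  · show (Ideal.Quotient.lift _ (eval₂RingHom F (ν * tv A n)) hker)
        (Ideal.Quotient.mk _ (X : Polynomial A)) = ν * tv A n
    rw [Ideal.Quotient.lift_mk, coe_eval₂RingHom, eval₂_X]
  · intro a
    show (Ideal.Quotient.lift _ (eval₂RingHom F (ν * tv A n)) hker)
        (Ideal.Quotient.mk _ (C a)) = _
    rw [Ideal.Quotient.lift_mk, coe_eval₂RingHom, eval₂_C]
    rfl
end

section
/- With notation as above (A a commutative Q-algebra with derivation ∂, B = A[t]/(t^n), φ_{μ,ν} the automorphism with φ_{μ,ν}(a) = Σ_i (1/i!)(μt)^i ∂^i(a), φ_{μ,ν}(t) = νt), the composition satisfies φ_{μ',ν'} ∘ φ_{μ,ν} = φ_{μ'',ν''} where μ'' = μ' + ν'·φ_{μ',ν'}(μ) and ν'' = ν'·φ_{μ',ν'}(ν). -/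
open Polynomial

lemma tv_pow_zero (A : Type) [CommRing A] (n m : ℕ) (h : n ≤ m) : (tv A n) ^ m = 0 := by
  show (Ideal.Quotient.mk _ X) ^ m = 0
  rw [← map_pow, Ideal.Quotient.eq_zero_iff_mem, Ideal.mem_span_singleton]
  exact pow_dvd_pow _ h

lemma map_qsmul {R S : Type} [CommRing R] [CommRing S] [Algebra ℚ R] [Algebra ℚ S]
    (f : R →+* S) (q : ℚ) (x : R) : f (q • x) = q • f x := by
  rw [Algebra.smul_def, Algebra.smul_def, map_mul]
  congr 1
  exact RingHom.congr_fun (Subsingleton.elim (f.comp (algebraMap ℚ R)) (algebraMap ℚ S)) q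

lemma triangle_sum {M : Type} [AddCommMonoid M] (n : ℕ) (F : ℕ → ℕ → M)
    (hF : ∀ i j, n ≤ i + j → F i j = 0) :
    ∑ i ∈ Finset.range n, ∑ j ∈ Finset.range n, F i j =
    ∑ k ∈ Finset.range n, ∑ i ∈ Finset.range (k + 1), F i (k - i) := by
  have h1 : ∀ i ∈ Finset.range n, ∑ j ∈ Finset.range n, F i j = ∑ j ∈ Finset.range (n - i), F i j := by
    intro i hi
    refine (Finset.sum_subset (Finset.range_subset_range.2 (by omega)) ?_).symm
    intro j hj hj'
    simp only [Finset.mem_range] at hj hj'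
    exact hF i j (by omega)
  rw [Finset.sum_congr rfl h1, Finset.sum_sigma', Finset.sum_sigma']
  refine Finset.sum_nbij' (fun p => ⟨p.1 + p.2, p.1⟩) (fun p => ⟨p.2, p.1 - p.2⟩) ?_ ?_ ?_ ?_ ?_
  · rintro ⟨i, j⟩ hp
    simp only [Finset.mem_sigma, Finset.mem_range] at hp
    dsimp only
    simp only [Finset.mem_sigma, Finset.mem_range]
    omega
  · rintro ⟨k, i⟩ hp
    simp only [Finset.mem_sigma, Finset.mem_range] at hp
    dsimp only
    simp only [Finset.mem_sigma, Finset.mem_range]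
    omega
  · rintro ⟨i, j⟩ hp
    simp only [Finset.mem_sigma, Finset.mem_range] at hp
    dsimp only
    simp
  · rintro ⟨k, i⟩ hp
    simp only [Finset.mem_sigma, Finset.mem_range] at hp
    dsimp only
    have h : i + (k - i) = k := by omega
    simp [h]
  · rintro ⟨k, i⟩ hp
    simp only [Finset.mem_sigma, Finset.mem_range] at hp
    dsimp only
    congr 1
    omega

lemma hscal (i k : ℕ) (h : i ≤ k) :
    (k.factorial : ℚ)⁻¹ * (k.choose i : ℚ) =
    (i.factorial : ℚ)⁻¹ * ((k - i).factorial : ℚ)⁻¹ := by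
  have h1 : ((k.choose i : ℚ)) * (i.factorial : ℚ) * ((k - i).factorial : ℚ) = (k.factorial : ℚ) := by
    exact_mod_cast congrArg (Nat.cast : ℕ → ℚ) (Nat.choose_mul_factorial_mul_factorial h)
  have h2 : (i.factorial : ℚ) ≠ 0 := Nat.cast_ne_zero.2 i.factorial_ne_zero
  have h3 : ((k - i).factorial : ℚ) ≠ 0 := Nat.cast_ne_zero.2 (k - i).factorial_ne_zero
  have h4 : (k.factorial : ℚ) ≠ 0 := Nat.cast_ne_zero.2 k.factorial_ne_zero
  field_simp
  linear_combination h1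

lemma aux_term {R : Type} [CommRing R] [Algebra ℚ R] (i k : ℕ) (hik : i ≤ k) (y x t g : R) :
    (k.factorial : ℚ)⁻¹ • (y ^ i * x ^ (k - i) * (k.choose i : R) * t ^ k * g) =
    ((i.factorial : ℚ)⁻¹ * ((k - i).factorial : ℚ)⁻¹) • (y ^ i * x ^ (k - i) * t ^ k * g) := by
  have hc : (k.choose i : R) = (k.choose i : ℚ) • (1 : R) := by
    rw [Nat.cast_smul_eq_nsmul, nsmul_eq_mul, mul_one]
  rw [hc, mul_smul_comm, smul_mul_assoc, smul_mul_assoc, smul_smul, mul_one, hscal i k hik]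

set_option synthInstance.maxHeartbeats 1000000

/-- composition law `φ_{μ',ν'} ∘ φ_{μ,ν} = φ_{μ'',ν''}` with
`μ'' = μ' + ν'·φ_{μ',ν'}(μ)` and `ν'' = ν'·φ_{μ',ν'}(ν)`. -/
theorem phi_comp (A : Type) [CommRing A] [Algebra ℚ A] (D : Derivation ℚ A A)
    (n : ℕ) (hn : 2 ≤ n) (μ ν μ' ν' : TruncP A n) (hν : IsUnit ν) (hν' : IsUnit ν')
    (φ φ' φ'' : TruncP A n →+* TruncP A n)
    (hφ : IsPhi A D n μ ν φ) (hφ' : IsPhi A D n μ' ν' φ')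
    (hφ'' : IsPhi A D n (μ' + ν' * φ' μ) (ν' * φ' ν) φ'') :
    φ'.comp φ = φ'' := by
  obtain ⟨hφt, hφa⟩ := hφ
  obtain ⟨hφ't, hφ'a⟩ := hφ'
  obtain ⟨hφ''t, hφ''a⟩ := hφ''
  refine Ideal.Quotient.ringHom_ext (Polynomial.ringHom_ext (fun a => ?_) ?_)
  swap
  · show φ' (φ (tv A n)) = φ'' (tv A n)
    rw [hφt, map_mul, hφ't, hφ''t]
    ring
  · show φ' (φ (algebraMap A (TruncP A n) a)) = φ'' (algebraMap A (TruncP A n) a)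
    set F : ℕ → ℕ → TruncP A n := fun i j =>
      ((i.factorial : ℚ)⁻¹ * (j.factorial : ℚ)⁻¹) •
        ((ν' * φ' μ) ^ i * μ' ^ j * (tv A n) ^ (i + j) *
          algebraMap A (TruncP A n) ((⇑D)^[i + j] a)) with hFdef
    have hD : ∀ j i : ℕ, (⇑D)^[j] ((⇑D)^[i] a) = (⇑D)^[i + j] a := fun j i => by
      rw [← Function.iterate_add_apply, Nat.add_comm]
    have lhs_eq : ∀ i : ℕ,
        φ' ((i.factorial : ℚ)⁻¹ • ((μ * tv A n) ^ i * algebraMap A (TruncP A n) ((⇑D)^[i] a))) =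
        ∑ j ∈ Finset.range n, F i j := by
      intro i
      rw [map_qsmul, map_mul, map_pow, map_mul, hφ't, hφ'a]
      simp only [hD]
      rw [Finset.mul_sum, Finset.smul_sum]
      refine Finset.sum_congr rfl fun j _ => ?_
      rw [mul_smul_comm, smul_smul]
      simp only [hFdef]
      congr 1
      ring
    have rhs_eq : ∀ k : ℕ,
        ((k.factorial : ℚ)⁻¹ •
          (((μ' + ν' * φ' μ) * tv A n) ^ k * algebraMap A (TruncP A n) ((⇑D)^[k] a))) =
        ∑ i ∈ Finset.range (k + 1), F i (k - i) := by
      intro k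
      rw [mul_pow, add_comm μ' (ν' * φ' μ), add_pow, Finset.sum_mul, Finset.sum_mul,
        Finset.smul_sum]
      refine Finset.sum_congr rfl fun i hi => ?_
      simp only [Finset.mem_range] at hi
      have hik : i ≤ k := by omega
      simp only [hFdef]
      rw [Nat.add_sub_cancel' hik]
      exact aux_term i k hik _ _ _ _
    have hFzero : ∀ i j : ℕ, n ≤ i + j → F i j = 0 := by
      intro i j h
      simp only [hFdef]
      rw [tv_pow_zero A n (i + j) h]
      simp
    rw [hφa a, map_sum, hφ''a a,
      Finset.sum_congr rfl (fun i _ => lhs_eq i),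
      Finset.sum_congr rfl (fun k _ => rhs_eq k)]
    exact triangle_sum n F hFzero
end

section
/- With the same notation, the inverse of φ_{μ,ν} is φ_{μ̄,ν̄}, where μ̄ = −φ_{μ,ν}^{-1}(μ/ν) and ν̄ = φ_{μ,ν}^{-1}(1/ν). In particular φ_{μ,ν} is an automorphism of B = A[t]/(t^n). -/
set_option synthInstance.maxHeartbeats 1000000
set_option maxHeartbeats 1000000
set_option linter.unusedSectionVars false


open Polynomial Finset

noncomputable def pmk (A : Type) [CommRing A] (n : ℕ) : Polynomial A →+* TruncP A n :=
  Ideal.Quotient.mk _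

theorem Derivation.iterate_leibniz {A : Type} [CommRing A] [Algebra ℚ A]
    (D : Derivation ℚ A A) (a b : A) (n : ℕ) :
    (⇑D)^[n] (a * b) =
      ∑ k ∈ range (n + 1), n.choose k • ((⇑D)^[n - k] a * (⇑D)^[k] b) := by
  have hmul : ∀ x y : A, D (x * y) = D x * y + x * D y := by
    intro x y; rw [Derivation.leibniz, smul_eq_mul, smul_eq_mul]; ring
  induction n with
  | zero => simp [Finset.range]
  | succ n IH =>
    calc
      (⇑D)^[n + 1] (a * b) =
          D (∑ k ∈ range (n + 1), n.choose k • ((⇑D)^[n - k] a * (⇑D)^[k] b)) := by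
        rw [Function.iterate_succ_apply', IH]
      _ = (∑ k ∈ range (n + 1), n.choose k • ((⇑D)^[n - k + 1] a * (⇑D)^[k] b)) +
          ∑ k ∈ range (n + 1), n.choose k • ((⇑D)^[n - k] a * (⇑D)^[k + 1] b) := by
        rw [map_sum]
        simp_rw [map_nsmul, hmul, Function.iterate_succ_apply', smul_add, sum_add_distrib]
      _ = (∑ k ∈ range (n + 1),
                n.choose k.succ • ((⇑D)^[n - k] a * (⇑D)^[k + 1] b)) +
              1 • ((⇑D)^[n + 1] a * (⇑D)^[0] b) +
            ∑ k ∈ range (n + 1), n.choose k • ((⇑D)^[n - k] a * (⇑D)^[k + 1] b) := ?_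
      _ = ((∑ k ∈ range (n + 1), n.choose k • ((⇑D)^[n - k] a * (⇑D)^[k + 1] b)) +
              ∑ k ∈ range (n + 1),
                n.choose k.succ • ((⇑D)^[n - k] a * (⇑D)^[k + 1] b)) +
            1 • ((⇑D)^[n + 1] a * (⇑D)^[0] b) := by
        rw [add_comm, add_assoc]
      _ = (∑ i ∈ range (n + 1),
              (n + 1).choose (i + 1) • ((⇑D)^[n + 1 - (i + 1)] a * (⇑D)^[i + 1] b)) +
            1 • ((⇑D)^[n + 1] a * (⇑D)^[0] b) := by
        simp_rw [Nat.choose_succ_succ, Nat.succ_sub_succ, add_smul, sum_add_distrib]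
      _ = ∑ k ∈ range (n + 1 + 1),
            (n + 1).choose k • ((⇑D)^[n + 1 - k] a * (⇑D)^[k] b) := by
        rw [sum_range_succ' _ (n + 1), Nat.choose_zero_right, tsub_zero]
    congr
    refine (sum_range_succ' _ _).trans (congr_arg₂ (· + ·) ?_ ?_)
    · rw [sum_range_succ, Nat.choose_succ_self, zero_smul, add_zero]
      refine sum_congr rfl fun k hk => ?_
      rw [mem_range] at hk
      congr
      omega
    · rw [Nat.choose_zero_right, tsub_zero]

theorem double_sum_tri {M : Type} [AddCommMonoid M] (n : ℕ) (f : ℕ → ℕ → M)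
    (hf : ∀ i j, n ≤ i + j → f i j = 0) :
    ∑ i ∈ range n, ∑ j ∈ range n, f i j
      = ∑ k ∈ range n, ∑ i ∈ range (k + 1), f i (k - i) := by
  rw [← Finset.sum_product']
  rw [show (∑ k ∈ range n, ∑ i ∈ range (k + 1), f i (k - i))
      = ∑ s ∈ (range n).sigma (fun k => range (k + 1)), f s.2 (s.1 - s.2) from
    (Finset.sum_sigma (range n) (fun k => range (k + 1)) (fun s => f s.2 (s.1 - s.2))).symm]
  rw [← Finset.sum_filter_of_ne (p := fun p : ℕ × ℕ => p.1 + p.2 < n)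
      (by intro p _ h; by_contra hc; exact h (hf p.1 p.2 (not_lt.1 hc)))]
  refine Finset.sum_nbij' (fun p => ⟨p.1 + p.2, p.1⟩) (fun s => (s.2, s.1 - s.2)) ?_ ?_ ?_ ?_ ?_
  · intro p hp
    simp only [Finset.mem_filter, Finset.mem_product, Finset.mem_range] at hp
    simp [Finset.mem_sigma, Finset.mem_range]
    omega
  · intro s hs
    simp only [Finset.mem_sigma, Finset.mem_range] at hs
    simp only [Finset.mem_filter, Finset.mem_product, Finset.mem_range]
    omega
  · intro p hp; simp
  · intro s hs
    simp only [Finset.mem_sigma, Finset.mem_range] at hs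
    ext <;> simp <;> omega
  · intro p hp; simp

theorem ratCoeff (k i : ℕ) (h : i ≤ k) :
    (k.factorial : ℚ)⁻¹ * (k.choose i : ℚ) =
      (i.factorial : ℚ)⁻¹ * ((k - i).factorial : ℚ)⁻¹ := by
  have h1 : ((k.choose i : ℕ) : ℚ) * ((i.factorial : ℕ) : ℚ) * (((k - i).factorial : ℕ) : ℚ)
      = ((k.factorial : ℕ) : ℚ) := by
    rw [← Nat.cast_mul, ← Nat.cast_mul, Nat.choose_mul_factorial_mul_factorial h]
  have h2 : (k.factorial : ℚ) ≠ 0 := Nat.cast_ne_zero.2 (Nat.factorial_ne_zero k)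
  have h3 : (i.factorial : ℚ) ≠ 0 := Nat.cast_ne_zero.2 (Nat.factorial_ne_zero i)
  have h4 : ((k - i).factorial : ℚ) ≠ 0 := Nat.cast_ne_zero.2 (Nat.factorial_ne_zero _)
  field_simp
  linear_combination h1

section Aux
variable (A : Type) [CommRing A] [Algebra ℚ A] (D : Derivation ℚ A A) (n : ℕ)

theorem eps_eq (a : A) : algebraMap A (TruncP A n) a = pmk A n (C a) := by
  rw [← Polynomial.algebraMap_eq, pmk, Ideal.Quotient.mk_algebraMap]

theorem tv_def : tv A n = pmk A n X := rfl

theorem tv_pow_eq_zero {m : ℕ} (h : n ≤ m) : (tv A n) ^ m = 0 := by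
  rw [tv_def, ← map_pow, pmk, Ideal.Quotient.eq_zero_iff_mem, Ideal.mem_span_singleton]
  exact pow_dvd_pow _ h

variable {A n}

theorem iterD_zero (k : ℕ) : (⇑D)^[k] (0 : A) = 0 := by
  induction k with
  | zero => rfl
  | succ k IH => rw [Function.iterate_succ_apply, map_zero, IH]

theorem iterD_one {k : ℕ} (hk : k ≠ 0) : (⇑D)^[k] (1 : A) = 0 := by
  obtain ⟨k, rfl⟩ := Nat.exists_eq_succ_of_ne_zero hk
  rw [Function.iterate_succ_apply, Derivation.map_one_eq_zero, iterD_zero]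

theorem iterD_add (k : ℕ) (a b : A) :
    (⇑D)^[k] (a + b) = (⇑D)^[k] a + (⇑D)^[k] b := by
  induction k with
  | zero => rfl
  | succ k IH => simp [Function.iterate_succ_apply', IH]

/-- The exponential-type map. -/
noncomputable def G (c : TruncP A n) (a : A) : TruncP A n :=
  ∑ i ∈ Finset.range n, (i.factorial : ℚ)⁻¹ •
    (c ^ i * algebraMap A (TruncP A n) ((⇑D)^[i] a))

theorem G_one (hn : 0 < n) (c : TruncP A n) : G D c (1 : A) = 1 := by
  rw [G, Finset.sum_eq_single 0]
  · simp
  · intro i _ hi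
    rw [iterD_one D hi, map_zero, mul_zero, smul_zero]
  · intro h; exact absurd (Finset.mem_range.2 hn) h

theorem G_zero (c : TruncP A n) : G D c (0 : A) = 0 := by
  rw [G]
  refine Finset.sum_eq_zero fun i _ => ?_
  rw [iterD_zero, map_zero, mul_zero, smul_zero]

theorem G_add (c : TruncP A n) (a b : A) : G D c (a + b) = G D c a + G D c b := by
  rw [G, G, G, ← Finset.sum_add_distrib]
  refine Finset.sum_congr rfl fun i _ => ?_
  rw [iterD_add, map_add, mul_add, smul_add]

theorem hLeib (a b : A) (k : ℕ) :
    (⇑D)^[k] (a * b) =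
      ∑ i ∈ range (k + 1), k.choose i • ((⇑D)^[i] a * (⇑D)^[k - i] b) := by
  rw [Derivation.iterate_leibniz, ← Finset.sum_range_reflect]
  refine Finset.sum_congr rfl fun j hj => ?_
  rw [Finset.mem_range] at hj
  have hjk : j ≤ k := by omega
  rw [show k + 1 - 1 - j = k - j from by omega, Nat.choose_symm hjk,
    show k - (k - j) = j from by omega]

theorem G_mul (hn : 0 < n) (x : TruncP A n) (a b : A) :
    G D (x * tv A n) (a * b) = G D (x * tv A n) a * G D (x * tv A n) b := by
  set c : TruncP A n := x * tv A n with hc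
  set ε : A →+* TruncP A n := (algebraMap A (TruncP A n) : A →+* TruncP A n) with hε
  have hcz : ∀ i j : ℕ, n ≤ i + j → c ^ i * c ^ j = 0 := by
    intro i j h
    rw [← pow_add, hc, mul_pow, tv_pow_eq_zero A n h, mul_zero]
  have hLHS : G D c (a * b) = ∑ k ∈ range n, ∑ i ∈ range (k + 1),
      ((i.factorial : ℚ)⁻¹ * (((k - i).factorial : ℚ))⁻¹) •
        (c ^ i * c ^ (k - i) * (ε ((⇑D)^[i] a) * ε ((⇑D)^[k - i] b))) := by
    rw [G]
    refine Finset.sum_congr rfl fun k hk => ?_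
    rw [hLeib D a b k, map_sum, Finset.mul_sum, Finset.smul_sum]
    refine Finset.sum_congr rfl fun i hi => ?_
    rw [Finset.mem_range] at hi
    have hik : i ≤ k := by omega
    rw [map_nsmul, mul_smul_comm, ← Nat.cast_smul_eq_nsmul ℚ, smul_smul,
      ratCoeff k i hik, map_mul,
      show c ^ i * c ^ (k - i) = c ^ k from by rw [← pow_add]; congr 1; omega]
  have hRHS : G D c a * G D c b = ∑ k ∈ range n, ∑ i ∈ range (k + 1),
      ((i.factorial : ℚ)⁻¹ * (((k - i).factorial : ℚ))⁻¹) •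
        (c ^ i * c ^ (k - i) * (ε ((⇑D)^[i] a) * ε ((⇑D)^[k - i] b))) := by
    rw [G, G, Finset.sum_mul_sum]
    refine (Finset.sum_congr rfl fun i _ => Finset.sum_congr rfl fun j _ => (by
      rw [smul_mul_assoc, mul_smul_comm, smul_smul, mul_mul_mul_comm] :
        (i.factorial : ℚ)⁻¹ • (c ^ i * ε ((⇑D)^[i] a)) *
          (j.factorial : ℚ)⁻¹ • (c ^ j * ε ((⇑D)^[j] b)) =
        ((i.factorial : ℚ)⁻¹ * ((j.factorial : ℚ))⁻¹) •
          (c ^ i * c ^ j * (ε ((⇑D)^[i] a) * ε ((⇑D)^[j] b))))).trans ?_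
    exact double_sum_tri n (fun i j => ((i.factorial : ℚ)⁻¹ * ((j.factorial : ℚ))⁻¹) •
        (c ^ i * c ^ j * (ε ((⇑D)^[i] a) * ε ((⇑D)^[j] b))))
      (fun i j h => by beta_reduce; rw [hcz i j h, zero_mul, smul_zero])
  rw [hLHS, hRHS]

theorem expAdd (x y : TruncP A n) (a : A) :
    ∑ j ∈ range n, ((j.factorial : ℚ)⁻¹) •
        ((x * tv A n) ^ j * ∑ i ∈ range n, ((i.factorial : ℚ)⁻¹) •
          ((y * tv A n) ^ i * algebraMap A (TruncP A n) ((⇑D)^[i] ((⇑D)^[j] a))))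
      = ∑ k ∈ range n, ((k.factorial : ℚ)⁻¹) •
          (((x + y) * tv A n) ^ k * algebraMap A (TruncP A n) ((⇑D)^[k] a)) := by
  set ε : A →+* TruncP A n := (algebraMap A (TruncP A n) : A →+* TruncP A n) with hε
  set t : TruncP A n := tv A n with hT
  have step1 : (∑ j ∈ range n, ((j.factorial : ℚ)⁻¹) •
        ((x * t) ^ j * ∑ i ∈ range n, ((i.factorial : ℚ)⁻¹) •
          ((y * t) ^ i * ε ((⇑D)^[i] ((⇑D)^[j] a)))))
      = ∑ j ∈ range n, ∑ i ∈ range n, ((j.factorial : ℚ)⁻¹ * (i.factorial : ℚ)⁻¹) •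
          (x ^ j * y ^ i * t ^ (j + i) * ε ((⇑D)^[j + i] a)) := by
    refine Finset.sum_congr rfl fun j _ => ?_
    rw [Finset.mul_sum, Finset.smul_sum]
    refine Finset.sum_congr rfl fun i _ => ?_
    rw [mul_smul_comm, smul_smul, ← Function.iterate_add_apply]
    congr 1
    rw [mul_pow, mul_pow, pow_add]
    ring
  rw [step1, double_sum_tri n (fun j i => ((j.factorial : ℚ)⁻¹ * (i.factorial : ℚ)⁻¹) •
      (x ^ j * y ^ i * t ^ (j + i) * ε ((⇑D)^[j + i] a)))
    (fun i j h => by beta_reduce; rw [tv_pow_eq_zero A n h, mul_zero, zero_mul, smul_zero])]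
  refine Finset.sum_congr rfl fun k hk => ?_
  rw [mul_pow, add_pow, Finset.sum_mul, Finset.sum_mul, Finset.smul_sum]
  refine Finset.sum_congr rfl fun j hj => ?_
  rw [Finset.mem_range] at hj
  have hjk : j ≤ k := by omega
  have hadd : j + (k - j) = k := by omega
  rw [hadd, show x ^ j * y ^ (k - j) * (k.choose j : TruncP A n) * t ^ k * ε ((⇑D)^[k] a)
      = (k.choose j : ℕ) • (x ^ j * y ^ (k - j) * t ^ k * ε ((⇑D)^[k] a)) from by
        rw [nsmul_eq_mul]; ring,
    ← Nat.cast_smul_eq_nsmul ℚ, smul_smul, ratCoeff k j hjk]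

variable (n) in
/-- The exponential ring hom `A → A[t]/(t^n)`. -/
noncomputable def Ehom (hn : 0 < n) (m : TruncP A n) : A →+* TruncP A n where
  toFun := fun a => G D (m * tv A n) a
  map_one' := G_one D hn _
  map_mul' := fun a b => G_mul D hn m a b
  map_zero' := G_zero D _
  map_add' := fun a b => G_add D _ a b

variable (n) in
/-- The endomorphism `φ_{m,v}` of `A[t]/(t^n)`. -/
noncomputable def Phi (hn : 0 < n) (m v : TruncP A n) : TruncP A n →+* TruncP A n :=
  Ideal.Quotient.lift _ (eval₂RingHom (Ehom D n hn m) (v * tv A n)) (by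
    intro f hf
    rw [Ideal.mem_span_singleton] at hf
    obtain ⟨g, rfl⟩ := hf
    rw [map_mul, map_pow, coe_eval₂RingHom, eval₂_X, mul_pow, tv_pow_eq_zero A n le_rfl,
      mul_zero, zero_mul])

theorem Phi_mk (hn : 0 < n) (m v : TruncP A n) (p : Polynomial A) :
    Phi D n hn m v (pmk A n p) = eval₂ (Ehom D n hn m) (v * tv A n) p :=
  Ideal.Quotient.lift_mk _ _ _

theorem Phi_tv (hn : 0 < n) (m v : TruncP A n) :
    Phi D n hn m v (tv A n) = v * tv A n := by
  rw [tv_def, Phi_mk, eval₂_X, ← tv_def]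

theorem Phi_eps (hn : 0 < n) (m v : TruncP A n) (a : A) :
    Phi D n hn m v (algebraMap A (TruncP A n) a) = G D (m * tv A n) a := by
  rw [eps_eq, Phi_mk, eval₂_C]; rfl

theorem isPhi_Phi (hn : 0 < n) (m v : TruncP A n) :
    IsPhi A D n m v (Phi D n hn m v) :=
  ⟨Phi_tv D hn m v, fun a => Phi_eps D hn m v a⟩

theorem isPhi_unique {m v : TruncP A n} {φ1 φ2 : TruncP A n →+* TruncP A n}
    (h1 : IsPhi A D n m v φ1) (h2 : IsPhi A D n m v φ2) : φ1 = φ2 := by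
  refine Ideal.Quotient.ringHom_ext (Polynomial.ringHom_ext (fun a => ?_) ?_)
  · show φ1 (pmk A n (C a)) = φ2 (pmk A n (C a))
    rw [← eps_eq, h1.2 a, h2.2 a]
  · show φ1 (pmk A n X) = φ2 (pmk A n X)
    rw [← tv_def, h1.1, h2.1]

theorem isPhi_id (hn : 0 < n) : IsPhi A D n 0 1 (RingHom.id (TruncP A n)) := by
  constructor
  · rw [RingHom.id_apply, one_mul]
  · intro a
    rw [RingHom.id_apply, Finset.sum_eq_single 0]
    · simp
    · intro i _ hi
      rw [zero_mul, zero_pow hi, zero_mul, smul_zero]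
    · intro h; exact absurd (Finset.mem_range.2 hn) h

theorem isPhi_comp {m v m' v' : TruncP A n} {ψ φ' : TruncP A n →+* TruncP A n}
    (hψ : IsPhi A D n m v ψ) (hφ' : IsPhi A D n m' v' φ') :
    IsPhi A D n (m' + φ' m * v') (φ' v * v') (φ'.comp ψ) := by
  constructor
  · rw [RingHom.comp_apply, hψ.1, map_mul, hφ'.1, mul_assoc]
  · intro a
    rw [RingHom.comp_apply, hψ.2 a, map_sum]
    have hterm : ∀ i ∈ Finset.range n,
        φ' ((i.factorial : ℚ)⁻¹ • ((m * tv A n) ^ i *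
            algebraMap A (TruncP A n) ((⇑D)^[i] a)))
          = (i.factorial : ℚ)⁻¹ • ((φ' m * v' * tv A n) ^ i *
              ∑ j ∈ Finset.range n, (j.factorial : ℚ)⁻¹ •
                ((m' * tv A n) ^ j *
                  algebraMap A (TruncP A n) ((⇑D)^[j] ((⇑D)^[i] a)))) := by
      intro i _
      rw [map_rat_smul, map_mul, map_pow, map_mul, hφ'.1, hφ'.2 ((⇑D)^[i] a), ← mul_assoc]
    rw [Finset.sum_congr rfl hterm, expAdd D (φ' m * v') m' a, add_comm (φ' m * v') m']

variable (n) in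
/-- Evaluation at `t = 0`. -/
noncomputable def rho (hn : 0 < n) : TruncP A n →+* A :=
  Ideal.Quotient.lift _ (evalRingHom 0) (by
    intro f hf
    rw [Ideal.mem_span_singleton] at hf
    obtain ⟨g, rfl⟩ := hf
    rw [coe_evalRingHom, eval_mul, eval_pow, eval_X, zero_pow (by omega), zero_mul])

theorem rho_mk (hn : 0 < n) (p : Polynomial A) : rho n hn (pmk A n p) = eval 0 p :=
  Ideal.Quotient.lift_mk _ _ _

theorem rho_eps (hn : 0 < n) (a : A) : rho n hn (algebraMap A (TruncP A n) a) = a := by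
  rw [eps_eq, rho_mk, eval_C]

theorem rho_tv (hn : 0 < n) : rho n hn (tv A n) = 0 := by
  rw [tv_def, rho_mk, eval_X]

theorem rho_comp {m v : TruncP A n} {φ : TruncP A n →+* TruncP A n}
    (hn : 0 < n) (hφ : IsPhi A D n m v φ) (x : TruncP A n) :
    rho n hn (φ x) = rho n hn x := by
  have : (rho n hn).comp φ = rho n hn := by
    refine Ideal.Quotient.ringHom_ext (Polynomial.ringHom_ext (fun a => ?_) ?_)
    · show rho n hn (φ (pmk A n (C a))) = rho n hn (pmk A n (C a))
      rw [← eps_eq, hφ.2 a, map_sum, rho_eps, Finset.sum_eq_single 0]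
      · simp [rho_eps]
      · intro i _ hi
        rw [map_rat_smul, map_mul, map_pow, map_mul, rho_tv, mul_zero,
          zero_pow hi, zero_mul, smul_zero]
      · intro h; exact absurd (Finset.mem_range.2 hn) h
    · show rho n hn (φ (pmk A n X)) = rho n hn (pmk A n X)
      rw [← tv_def, hφ.1, map_mul, rho_tv, mul_zero]
  exact DFunLike.congr_fun this x

theorem exists_decomp (hn : 0 < n) (x : TruncP A n) :
    ∃ y, x = algebraMap A (TruncP A n) (rho n hn x) + tv A n * y := by
  obtain ⟨p, rfl⟩ := Ideal.Quotient.mk_surjective x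
  refine ⟨pmk A n p.divX, ?_⟩
  show pmk A n p = algebraMap A (TruncP A n) ((rho n hn) (pmk A n p)) + tv A n * pmk A n p.divX
  rw [rho_mk, eps_eq, tv_def, ← map_mul, ← map_add, ← coeff_zero_eq_eval_zero]
  congr 1
  rw [add_comm, X_mul_divX_add]

theorem isUnit_of_rho (hn : 0 < n) {x : TruncP A n} (h : IsUnit (rho n hn x)) :
    IsUnit x := by
  obtain ⟨y, hy⟩ := exists_decomp hn x
  rw [hy]
  refine IsNilpotent.isUnit_add_left_of_commute (r := tv A n * y) ⟨n, ?_⟩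
    (h.map (algebraMap A (TruncP A n))) (Commute.all _ _)
  rw [mul_pow, tv_pow_eq_zero A n le_rfl, zero_mul]

theorem isPhi_surj {m v : TruncP A n} {φ : TruncP A n →+* TruncP A n}
    (hn : 0 < n) (hv : IsUnit v) (hφ : IsPhi A D n m v φ) :
    Function.Surjective φ := by
  have hu : IsUnit (rho n hn v) := hv.map (rho n hn)
  set u : Aˣ := hu.unit with hud
  have huv : (↑u : A) = rho n hn v := hu.unit_spec
  have hphie : ∀ c : A, ∃ y, φ (algebraMap A (TruncP A n) c)
      = algebraMap A (TruncP A n) c + tv A n * y := by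
    intro c
    obtain ⟨y, hy⟩ := exists_decomp hn (φ (algebraMap A (TruncP A n) c))
    exact ⟨y, by rw [hy, rho_comp D hn hφ, rho_eps]⟩
  have key : ∀ j : ℕ, j ≤ n → ∀ p : Polynomial A, pmk A n (X ^ (n - j) * p) ∈ φ.range := by
    intro j
    induction j with
    | zero =>
      intro _ p
      have h0 : pmk A n (X ^ (n - 0) * p) = 0 := by
        rw [pmk, Ideal.Quotient.eq_zero_iff_mem, Ideal.mem_span_singleton, Nat.sub_zero]
        exact dvd_mul_right _ _
      rw [h0]; exact zero_mem _
    | succ j IH =>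
      intro hj p
      have hj' : j ≤ n := by omega
      set k := n - (j + 1) with hk
      have hnk : n - j = k + 1 := by omega
      have sub1 : ∀ q : Polynomial A, pmk A n (X ^ (k + 1) * q) ∈ φ.range := by
        intro q; have := IH hj' q; rwa [hnk] at this
      have sub2 : ∀ a : A, algebraMap A (TruncP A n) a * (tv A n) ^ k ∈ φ.range := by
        intro a
        set c : A := (↑u⁻¹ : A) ^ k * a with hcdef
        obtain ⟨y, hy⟩ := hphie c
        obtain ⟨w, hw⟩ := exists_decomp hn (v ^ k)
        have hrv : rho n hn (v ^ k) = (↑u : A) ^ k := by rw [map_pow, ← huv]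
        rw [hrv] at hw
        have hca : c * ((↑u : A) ^ k) = a := by
          rw [hcdef, mul_comm ((↑u⁻¹ : A) ^ k) a, mul_assoc, ← mul_pow, u.inv_mul,
            one_pow, mul_one]
        have hmap : algebraMap A (TruncP A n) c * algebraMap A (TruncP A n) ((↑u : A) ^ k)
            = algebraMap A (TruncP A n) a := by rw [← map_mul, hca]
        have hq : φ (algebraMap A (TruncP A n) c * (tv A n) ^ k)
            = algebraMap A (TruncP A n) a * (tv A n) ^ k
              + (tv A n) ^ (k + 1) * (algebraMap A (TruncP A n) c * w + y * v ^ k) := by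
          rw [map_mul, map_pow, hφ.1, hy, mul_pow]
          linear_combination ((tv A n) ^ k * algebraMap A (TruncP A n) c) * hw
            + ((tv A n) ^ k) * hmap
        obtain ⟨q, hqq⟩ := Ideal.Quotient.mk_surjective
          (algebraMap A (TruncP A n) c * w + y * v ^ k)
        have h2 : (tv A n) ^ (k + 1) * (algebraMap A (TruncP A n) c * w + y * v ^ k)
            ∈ φ.range := by
          rw [show ((Ideal.Quotient.mk (Ideal.span {(X : Polynomial A) ^ n})) q : TruncP A n)
              = pmk A n q from rfl] at hqq
          rw [← hqq, tv_def, ← map_pow, ← map_mul]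
          exact sub1 q
        have h3 : algebraMap A (TruncP A n) a * (tv A n) ^ k
            = φ (algebraMap A (TruncP A n) c * (tv A n) ^ k)
              - (tv A n) ^ (k + 1) * (algebraMap A (TruncP A n) c * w + y * v ^ k) := by
          rw [hq]; ring
        rw [h3]
        exact sub_mem (RingHom.mem_range_self φ _) h2
      have hdecomp : pmk A n (X ^ k * p)
          = algebraMap A (TruncP A n) (p.coeff 0) * (tv A n) ^ k
            + pmk A n (X ^ (k + 1) * p.divX) := by
        rw [eps_eq, tv_def, ← map_pow, ← map_mul, ← map_add]
        congr 1
        conv_lhs => rw [← X_mul_divX_add p]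
        ring
      rw [hdecomp]
      exact add_mem (sub2 _) (sub1 _)
  intro x
  obtain ⟨p, hp⟩ := Ideal.Quotient.mk_surjective x
  have hx : x = pmk A n p := hp.symm
  have := key n le_rfl p
  rwa [Nat.sub_self, pow_zero, one_mul, ← hx] at this

end Aux

/-- the inverse of `φ_{μ,ν}` is `φ_{μ̄,ν̄}` with
`μ̄ = −φ_{μ,ν}⁻¹(μ/ν)`, `ν̄ = φ_{μ,ν}⁻¹(1/ν)`; in particular `φ_{μ,ν}` is an
automorphism of `B = A[t]/(t^n)`. -/
theorem phi_inv (A : Type) [CommRing A] [Algebra ℚ A] (D : Derivation ℚ A A)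
    (n : ℕ) (hn : 2 ≤ n) (μ ν : TruncP A n) (hν : IsUnit ν)
    (φ : TruncP A n →+* TruncP A n) (hφ : IsPhi A D n μ ν φ) :
    ∃ ψ : TruncP A n →+* TruncP A n,
      ψ.comp φ = RingHom.id _ ∧ φ.comp ψ = RingHom.id _ ∧
      IsPhi A D n (-(ψ (μ * ↑hν.unit⁻¹))) (ψ ↑hν.unit⁻¹) ψ := by
  have hn0 : 0 < n := by omega
  have hsurj : Function.Surjective φ := isPhi_surj D hn0 hν hφ
  obtain ⟨v', hv'⟩ := hsurj (↑hν.unit⁻¹ : TruncP A n)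
  obtain ⟨m', hm'⟩ := hsurj (-(μ * ↑hν.unit⁻¹))
  set ψ := Phi D n hn0 m' v' with hψdef
  have hψ : IsPhi A D n m' v' ψ := isPhi_Phi D hn0 m' v'
  have hcomp : IsPhi A D n (μ + φ m' * ν) (φ v' * ν) (φ.comp ψ) := isPhi_comp D hψ hφ
  rw [hm', hv'] at hcomp
  have e2 : (↑hν.unit⁻¹ : TruncP A n) * ν = 1 := IsUnit.val_inv_mul hν
  have e1 : μ + -(μ * ↑hν.unit⁻¹) * ν = 0 := by linear_combination -μ * e2
  rw [e1, e2] at hcomp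
  have hid : φ.comp ψ = RingHom.id _ := isPhi_unique D hcomp (isPhi_id D hn0)
  have hv'u : IsUnit v' := by
    apply isUnit_of_rho hn0
    have hr : rho n hn0 (φ v') = rho n hn0 v' := rho_comp D hn0 hφ v'
    rw [hv'] at hr
    rw [← hr]
    exact (hν.unit⁻¹).isUnit.map _
  have hψsurj : Function.Surjective ψ := isPhi_surj D hn0 hv'u hψ
  have hid2 : ψ.comp φ = RingHom.id _ := by
    refine RingHom.ext fun x => ?_
    obtain ⟨y, rfl⟩ := hψsurj x
    show ψ (φ (ψ y)) = ψ y
    rw [show φ (ψ y) = y from DFunLike.congr_fun hid y]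
  have hp1 : ψ (↑hν.unit⁻¹ : TruncP A n) = v' := by
    rw [← hv']
    exact DFunLike.congr_fun hid2 v'
  have hp2 : -(ψ (μ * ↑hν.unit⁻¹)) = m' := by
    have h4 : μ * ↑hν.unit⁻¹ = φ (-m') := by rw [map_neg, hm', neg_neg]
    rw [h4, show ψ (φ (-m')) = -m' from DFunLike.congr_fun hid2 (-m'), neg_neg]
  refine ⟨ψ, hid2, hid, ?_⟩
  rw [hp1, hp2]
  exact hψ
end

section
/- Let A be a local ring, n ≥ 3, R = A[t]/(t^{n-1}), and let 0 → A → N → R/(t^{n-2}) → 0 be a short exact sequence of R-modules corresponding to α ∈ A under the isomorphism Ext^1_R(R/(t^{n-2}), A) ≅ A. Then N is isomorphic to R as an R-module if and only if α is a unit of A. -/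
open Polynomial

set_option maxHeartbeats 2000000
set_option synthInstance.maxHeartbeats 400000

/-- for `R = A[t]/(t^{n-1})` over a local ring `A`, if
`0 → A → N → R/(t^{n-2}) → 0` is a short exact sequence of `R`-modules (with
`A = R/(t)`) whose class in `Ext^1_R(R/(t^{n-2}), A) ≅ A` is `α` — concretely,
computed from the free resolution `··· → R →(·t) R →(·t^{n-2}) R → R/(t^{n-2}) → 0`,
`α` satisfies `t^{n-2}·e = ι(α)` for a lift `e ∈ N` of `1 ∈ R/(t^{n-2})` — then
`N ≅ R` as `R`-modules if and only if `α` is a unit of `A = R/(t)`. -/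
theorem middle_free_iff_unit (A : Type) [CommRing A] [IsLocalRing A]
    (n : ℕ) (hn : 3 ≤ n)
    (N : Type) [AddCommGroup N] [Module (TruncP A (n-1)) N]
    (ι : (TruncP A (n-1) ⧸ Ideal.span {tv A (n-1)}) →ₗ[TruncP A (n-1)] N)
    (q : N →ₗ[TruncP A (n-1)] (TruncP A (n-1) ⧸ Ideal.span {tv A (n-1) ^ (n-2)}))
    (hι : Function.Injective ι) (hq : Function.Surjective q)
    (hexact : LinearMap.range ι = LinearMap.ker q)
    (α : TruncP A (n-1) ⧸ Ideal.span {tv A (n-1)})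
    (hα : ∃ e : N, q e = Ideal.Quotient.mk _ 1 ∧ tv A (n-1) ^ (n-2) • e = ι α) :
    Nonempty (N ≃ₗ[TruncP A (n-1)] TruncP A (n-1)) ↔ IsUnit α := by
  obtain ⟨e, hqe, hte⟩ := hα
  have hk : (n - 2) + 1 = n - 1 := by omega
  have htv : tv A (n-1) = Ideal.Quotient.mk _ Polynomial.X := rfl
  -- t^(n-1) = 0 in R
  have htm : tv A (n-1) ^ (n-1) = 0 := by
    rw [htv, ← map_pow, Ideal.Quotient.eq_zero_iff_mem]
    exact Ideal.mem_span_singleton_self _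
  -- t^(n-2) can be cancelled up to (t)
  have hreg : ∀ z : TruncP A (n-1), tv A (n-1) ^ (n-2) * z = 0 →
      z ∈ Ideal.span {tv A (n-1)} := by
    intro z hz
    obtain ⟨p, rfl⟩ := Ideal.Quotient.mk_surjective z
    rw [htv, ← map_pow, ← map_mul, Ideal.Quotient.eq_zero_iff_mem,
      Ideal.mem_span_singleton] at hz
    obtain ⟨g, hg⟩ := hz
    rw [← hk, pow_succ, mul_assoc] at hg
    have hpg : p = Polynomial.X * g := (Polynomial.isRegular_X_pow (n-2)).left hg
    rw [Ideal.mem_span_singleton]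
    exact ⟨Ideal.Quotient.mk _ g, by rw [htv, ← map_mul, hpg]⟩
  -- smul on quotients
  have hsm : ∀ (I : Ideal (TruncP A (n-1))) (r x : TruncP A (n-1)),
      r • (Ideal.Quotient.mk I x) = Ideal.Quotient.mk I (r * x) := fun _ _ _ => rfl
  have hiota : ∀ r : TruncP A (n-1), ι (Ideal.Quotient.mk _ r)
      = r • ι (Ideal.Quotient.mk _ 1) := by
    intro r
    rw [← map_smul, hsm, mul_one]
  constructor
  · rintro ⟨f⟩
    have hrep : ∀ y : N, y = (f y) • (f.symm 1) := by
      intro y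
      rw [← map_smul, smul_eq_mul, mul_one, LinearEquiv.symm_apply_apply]
    have hcancel : ∀ r s : TruncP A (n-1), r • (f.symm 1) = s • (f.symm 1) → r = s := by
      intro r s h
      have h2 := congrArg f h
      rw [map_smul, map_smul, LinearEquiv.apply_symm_apply, smul_eq_mul,
        smul_eq_mul, mul_one, mul_one] at h2
      exact h2
    obtain ⟨c, hc⟩ := Ideal.Quotient.mk_surjective (q (f.symm 1))
    -- (1) f e * c ≡ 1 mod t^(n-2)
    have h1 : f e * c - 1 ∈ Ideal.span {tv A (n-1) ^ (n-2)} := by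
      have h2 : q e = Ideal.Quotient.mk _ (f e * c) := by
        conv_lhs => rw [hrep e]
        rw [map_smul, ← hc, hsm]
      rw [hqe] at h2
      exact Ideal.Quotient.eq.mp h2.symm
    -- (2) f (ι 1) ∈ (t^(n-2))
    have h2 : ∃ w : TruncP A (n-1),
        f (ι (Ideal.Quotient.mk _ 1)) = tv A (n-1) ^ (n-2) * w := by
      have hvc : f (ι (Ideal.Quotient.mk _ 1)) * c ∈ Ideal.span {tv A (n-1) ^ (n-2)} := by
        have hm : ι (Ideal.Quotient.mk (Ideal.span {tv A (n-1)}) 1) ∈ LinearMap.ker q := by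
          rw [← hexact]; exact ⟨_, rfl⟩
        have h3 : q (ι (Ideal.Quotient.mk (Ideal.span {tv A (n-1)}) 1)) = 0 := hm
        conv_lhs at h3 => rw [hrep (ι (Ideal.Quotient.mk _ 1))]
        rw [map_smul, ← hc, hsm, Ideal.Quotient.eq_zero_iff_mem] at h3
        exact h3
      have hvmem : f (ι (Ideal.Quotient.mk _ 1)) ∈ Ideal.span {tv A (n-1) ^ (n-2)} := by
        have hv2 : f (ι (Ideal.Quotient.mk _ 1)) =
            -(f (ι (Ideal.Quotient.mk _ 1)) * (f e * c - 1))
              + f e * (f (ι (Ideal.Quotient.mk _ 1)) * c) := by ring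
        rw [hv2]
        exact add_mem (neg_mem (Ideal.mul_mem_left _ _ h1)) (Ideal.mul_mem_left _ _ hvc)
      rw [Ideal.mem_span_singleton] at hvmem
      exact hvmem
    obtain ⟨w, hw⟩ := h2
    -- (3) t^(n-2) • (f.symm 1) ∈ range ι, giving 1 - b*w ∈ (t)
    have h3 : ∃ b : TruncP A (n-1), tv A (n-1) ^ (n-2) * (1 - b * w) = 0 := by
      have hker : tv A (n-1) ^ (n-2) • (f.symm 1) ∈ LinearMap.ker q := by
        rw [LinearMap.mem_ker, map_smul, ← hc, hsm, Ideal.Quotient.eq_zero_iff_mem]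
        exact Ideal.mul_mem_right _ _ (Ideal.mem_span_singleton_self _)
      rw [← hexact] at hker
      obtain ⟨z, hz⟩ := hker
      obtain ⟨b, rfl⟩ := Ideal.Quotient.mk_surjective z
      rw [hiota] at hz
      conv_lhs at hz => rw [hrep (ι (Ideal.Quotient.mk _ 1))]
      rw [smul_smul] at hz
      have h4 := hcancel _ _ hz
      exact ⟨b, by linear_combination (-1 : TruncP A (n-1)) * h4 + b * hw⟩
    obtain ⟨b, hb⟩ := h3
    -- (4) from hte : t^(n-2) * (f e) = a * (t^(n-2) * w) where α = mk a
    obtain ⟨a, ha⟩ := Ideal.Quotient.mk_surjective α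
    have h4 : tv A (n-1) ^ (n-2) * (f e - a * w) = 0 := by
      have hL : tv A (n-1) ^ (n-2) • e = (tv A (n-1) ^ (n-2) * f e) • (f.symm 1) := by
        conv_lhs => rw [hrep e]
        rw [smul_smul]
      have hR : ι α = (a * f (ι (Ideal.Quotient.mk _ 1))) • (f.symm 1) := by
        rw [← ha, hiota]
        conv_lhs => rw [hrep (ι (Ideal.Quotient.mk _ 1))]
        rw [smul_smul]
      have h5 := hcancel _ _ ((hL.symm.trans hte).trans hR)
      linear_combination h5 + a * hw
    -- conclude in A = R/(t)
    have hspan : Ideal.span {tv A (n-1) ^ (n-2)} ≤ Ideal.span {tv A (n-1)} := by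
      rw [Ideal.span_singleton_le_span_singleton]
      exact dvd_pow_self _ (by omega : n - 2 ≠ 0)
    have hπu : IsUnit (Ideal.Quotient.mk (Ideal.span {tv A (n-1)}) (f e)) := by
      have h1' : Ideal.Quotient.mk (Ideal.span {tv A (n-1)}) (f e * c - 1) = 0 := by
        rw [Ideal.Quotient.eq_zero_iff_mem]; exact hspan h1
      rw [map_sub, map_one, map_mul, sub_eq_zero] at h1'
      exact ⟨⟨_, _, h1', (mul_comm (Ideal.Quotient.mk (Ideal.span {tv A (n-1)}) c) (Ideal.Quotient.mk (Ideal.span {tv A (n-1)}) (f e))).trans h1'⟩, rfl⟩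
    have hπaw : Ideal.Quotient.mk (Ideal.span {tv A (n-1)}) (f e)
        = Ideal.Quotient.mk (Ideal.span {tv A (n-1)}) a
          * Ideal.Quotient.mk (Ideal.span {tv A (n-1)}) w := by
      have h6 := hreg _ h4
      rw [← Ideal.Quotient.eq_zero_iff_mem, map_sub, map_mul, sub_eq_zero] at h6
      exact h6
    rw [hπaw] at hπu
    rw [← ha]
    obtain ⟨u, hu⟩ := hπu
    have p0 : (Ideal.Quotient.mk (Ideal.span {tv A (n-1)}) a * Ideal.Quotient.mk (Ideal.span {tv A (n-1)}) w) * ((u⁻¹ : (TruncP A (n-1) ⧸ Ideal.span {tv A (n-1)})ˣ) : (TruncP A (n-1) ⧸ Ideal.span {tv A (n-1)})) = 1 :=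
      (congrArg (fun z : (TruncP A (n-1) ⧸ Ideal.span {tv A (n-1)}) => z * ((u⁻¹ : (TruncP A (n-1) ⧸ Ideal.span {tv A (n-1)})ˣ) : (TruncP A (n-1) ⧸ Ideal.span {tv A (n-1)}))) hu.symm).trans u.mul_inv
    have p1 : Ideal.Quotient.mk (Ideal.span {tv A (n-1)}) a * (Ideal.Quotient.mk (Ideal.span {tv A (n-1)}) w * ((u⁻¹ : (TruncP A (n-1) ⧸ Ideal.span {tv A (n-1)})ˣ) : (TruncP A (n-1) ⧸ Ideal.span {tv A (n-1)}))) = 1 :=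
      (mul_assoc (Ideal.Quotient.mk (Ideal.span {tv A (n-1)}) a) (Ideal.Quotient.mk (Ideal.span {tv A (n-1)}) w) ((u⁻¹ : (TruncP A (n-1) ⧸ Ideal.span {tv A (n-1)})ˣ) : (TruncP A (n-1) ⧸ Ideal.span {tv A (n-1)}))).symm.trans p0
    exact ⟨⟨_, _, p1, (mul_comm (Ideal.Quotient.mk (Ideal.span {tv A (n-1)}) w * ((u⁻¹ : (TruncP A (n-1) ⧸ Ideal.span {tv A (n-1)})ˣ) : (TruncP A (n-1) ⧸ Ideal.span {tv A (n-1)}))) (Ideal.Quotient.mk (Ideal.span {tv A (n-1)}) a)).trans p1⟩, rfl⟩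
  · intro hαu
    have hinj : Function.Injective (LinearMap.toSpanSingleton (TruncP A (n-1)) N e) := by
      rw [injective_iff_map_eq_zero]
      intro r hr
      rw [LinearMap.toSpanSingleton_apply] at hr
      have hqr : Ideal.Quotient.mk (Ideal.span {tv A (n-1) ^ (n-2)}) r = 0 := by
        have h2 := congrArg q hr
        rw [map_smul, hqe, hsm, mul_one, map_zero] at h2
        exact h2
      rw [Ideal.Quotient.eq_zero_iff_mem, Ideal.mem_span_singleton] at hqr
      obtain ⟨s, hs⟩ := hqr
      have h3 : r • e = ι (s • α) := by
        rw [map_smul, ← hte, smul_smul, hs]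
        ring_nf
      rw [hr] at h3
      have hsα : s • α = 0 := hι (by rw [← h3, map_zero])
      obtain ⟨a, ha⟩ := Ideal.Quotient.mk_surjective α
      rw [← ha, hsm, Ideal.Quotient.eq_zero_iff_mem] at hsα
      -- s * a ∈ (t); use unit α to get s ∈ (t)
      have hπs : Ideal.Quotient.mk (Ideal.span {tv A (n-1)}) s = 0 := by
        have hu' : IsUnit (Ideal.Quotient.mk (Ideal.span {tv A (n-1)}) a) := by
          rw [ha]; exact hαu
        obtain ⟨uu, huu⟩ := hu'
        have h0 : Ideal.Quotient.mk (Ideal.span {tv A (n-1)}) s * (uu : _) = 0 := by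
          rw [huu, ← map_mul, Ideal.Quotient.eq_zero_iff_mem]
          exact hsα
        exact (Units.mul_left_eq_zero (M₀ := (TruncP A (n-1) ⧸ Ideal.span {tv A (n-1)})) (a := Ideal.Quotient.mk (Ideal.span {tv A (n-1)}) s) uu).mp h0
      rw [Ideal.Quotient.eq_zero_iff_mem, Ideal.mem_span_singleton] at hπs
      obtain ⟨g, hg⟩ := hπs
      rw [hs, hg, ← mul_assoc, ← pow_succ, hk, htm, zero_mul]
    have hsurj : Function.Surjective (LinearMap.toSpanSingleton (TruncP A (n-1)) N e) := by
      intro x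
      obtain ⟨r, hr⟩ := Ideal.Quotient.mk_surjective (q x)
      have hker : x - r • e ∈ LinearMap.ker q := by
        rw [LinearMap.mem_ker, map_sub, map_smul, hqe, hsm, mul_one, ← hr, sub_self]
      rw [← hexact] at hker
      obtain ⟨z, hz⟩ := hker
      obtain ⟨s, rfl⟩ := Ideal.Quotient.mk_surjective z
      obtain ⟨uu, huu⟩ := hαu
      obtain ⟨β, hβ⟩ := Ideal.Quotient.mk_surjective
        ((uu⁻¹ : _) : TruncP A (n-1) ⧸ Ideal.span {tv A (n-1)})
      have hz2 : ι (Ideal.Quotient.mk _ s) = (s * β * tv A (n-1) ^ (n-2)) • e := by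
        obtain ⟨a, ha⟩ := Ideal.Quotient.mk_surjective α
        have hsβ : Ideal.Quotient.mk (Ideal.span {tv A (n-1)}) s = (s * β) • α := by
          have h7 : Ideal.Quotient.mk (Ideal.span {tv A (n-1)}) β
              * Ideal.Quotient.mk (Ideal.span {tv A (n-1)}) a = 1 := by
            rw [hβ, ha, ← huu, Units.inv_mul]
          rw [← ha, hsm]
          calc Ideal.Quotient.mk (Ideal.span {tv A (n-1)}) s
              = Ideal.Quotient.mk (Ideal.span {tv A (n-1)}) s
                * (Ideal.Quotient.mk (Ideal.span {tv A (n-1)}) β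
                  * Ideal.Quotient.mk (Ideal.span {tv A (n-1)}) a) := by
                rw [h7]; exact (mul_one (Ideal.Quotient.mk (Ideal.span {tv A (n-1)}) s)).symm
            _ = Ideal.Quotient.mk (Ideal.span {tv A (n-1)}) (s * β * a) := by
                rw [map_mul, map_mul, mul_assoc]
        rw [hsβ, map_smul, ← hte, smul_smul]
      refine ⟨r + s * β * tv A (n-1) ^ (n-2), ?_⟩
      rw [LinearMap.toSpanSingleton_apply, add_smul, ← hz2, hz]
      abel
    exact ⟨(LinearEquiv.ofBijective (LinearMap.toSpanSingleton (TruncP A (n-1)) N e)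
      ⟨hinj, hsurj⟩).symm⟩
end

section
/- Module version of the extension lemma: let R be a commutative ring and G, F, E, U be R-modules with an exact sequence 0 → G ⊕ F →(β) E → U → 0. For ψ ∈ Hom_R(G, F) set E_ψ = coker(β ∘ (id_G, −ψ) : G → E). Then the class η(ψ) ∈ Ext^1_R(U, F) of the induced extension 0 → F → E_ψ → U → 0 satisfies η(ψ) − η(0) = ψ_*(σ_G), where σ_G ∈ Ext^1_R(U, G) is the G-component of the class of the given extension of U by G ⊕ F. -/
open CategoryTheory CategoryTheory.Limits CategoryTheory.Abelian

noncomputable section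

set_option maxHeartbeats 1000000
set_option synthInstance.maxHeartbeats 400000

set_option linter.unusedSectionVars false
set_option linter.unusedVariables false

open CategoryTheory.Category CategoryTheory.Pretriangulated

universe w v u

namespace CategoryTheory.Abelian.Ext

variable {C : Type u} [Category.{v} C] [Abelian C] [HasExt.{w} C]

lemma mk₀_add' {X Y : C} (f g : X ⟶ Y) :
    Ext.mk₀ (f + g) = (Ext.mk₀ f + Ext.mk₀ g : Ext X Y 0) := by
  letI := HasDerivedCategory.standard C
  apply Ext.ext
  rw [Ext.add_hom, Ext.mk₀_hom, Ext.mk₀_hom, Ext.mk₀_hom, Functor.map_add]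
  simp [ShiftedHom.mk₀, Preadditive.add_comp]

end CategoryTheory.Abelian.Ext

variable {R : Type} [CommRing R]

/-- Given an exact sequence `0 → G ⊕ F →(β) E → U → 0` of `R`-modules and
`ψ : G ⟶ F`, the induced short complex `0 → F → E_ψ → U → 0`, where
`E_ψ = coker(β ∘ (id_G, −ψ))`. -/
noncomputable def pushoutComplex {G F E U : ModuleCat.{0} R}
    (β : biprod G F ⟶ E) (p : E ⟶ U) (hw : β ≫ p = 0) (ψ : G ⟶ F) :
    ShortComplex (ModuleCat.{0} R) :=
  ShortComplex.mk
    (biprod.inr ≫ β ≫ cokernel.π (biprod.lift (𝟙 G) (-ψ) ≫ β))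
    (cokernel.desc (biprod.lift (𝟙 G) (-ψ) ≫ β) p
      (by rw [Category.assoc, hw, Limits.comp_zero]))
    (by
      simp only [Category.assoc, cokernel.π_desc]
      rw [hw, Limits.comp_zero])

lemma pushoutComplex_shortExact {G F E U : ModuleCat.{0} R}
    (β : biprod G F ⟶ E) (p : E ⟶ U) (hw : β ≫ p = 0)
    (hS : (ShortComplex.mk β p hw).ShortExact) (ψ : G ⟶ F) :
    (pushoutComplex β p hw ψ).ShortExact := by
  have capp : ∀ {A B C' : ModuleCat.{0} R} (f : A ⟶ B) (g : B ⟶ C') (x : A),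
      (f ≫ g) x = g (f x) := fun _ _ _ => rfl
  have hβ : Function.Injective β := (ModuleCat.mono_iff_injective β).mp hS.mono_f
  have hπ : Function.Surjective (cokernel.π (biprod.lift (𝟙 G) (-ψ) ≫ β)) :=
    (ModuleCat.epi_iff_surjective _).mp inferInstance
  have hker : ∀ x : E, cokernel.π (biprod.lift (𝟙 G) (-ψ) ≫ β) x = 0 →
      ∃ g : G, (biprod.lift (𝟙 G) (-ψ) ≫ β) g = x := by
    intro x hx
    have h1 := ConcreteCategory.congr_hom
      (ModuleCat.cokernel_π_cokernelIsoRangeQuotient_hom (biprod.lift (𝟙 G) (-ψ) ≫ β)) x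
    rw [capp, hx, map_zero] at h1
    have h2 : x ∈ LinearMap.range (biprod.lift (𝟙 G) (-ψ) ≫ β).hom :=
      (Submodule.Quotient.mk_eq_zero _).mp h1.symm
    exact h2
  have hid : (biprod.fst ≫ biprod.lift (𝟙 G) (-ψ)) +
      ((biprod.fst ≫ ψ + biprod.snd) ≫ biprod.inr) = 𝟙 (biprod G F) := by
    apply biprod.hom_ext <;> simp
  have hsplit : ∀ w : ↑(biprod G F),
      (biprod.lift (𝟙 G) (-ψ)) ((biprod.fst : biprod G F ⟶ G) w) +
        (biprod.inr : F ⟶ biprod G F) (ψ ((biprod.fst : biprod G F ⟶ G) w) +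
          (biprod.snd : biprod G F ⟶ F) w) = w := by
    intro w
    have h := ConcreteCategory.congr_hom hid w
    simpa [capp, LinearMap.add_apply, map_add] using h
  refine { exact := ?_, mono_f := ?_, epi_g := ?_ }
  · rw [ShortComplex.moduleCat_exact_iff]
    intro x₂ hx₂
    obtain ⟨e, rfl⟩ := hπ x₂
    have hpe : p e = 0 := by
      have h3 := ConcreteCategory.congr_hom
        (cokernel.π_desc (biprod.lift (𝟙 G) (-ψ) ≫ β) p
          (by rw [Category.assoc, hw, Limits.comp_zero])) e
      rw [capp] at h3
      rw [← h3]
      exact hx₂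
    have hexact := hS.exact
    rw [ShortComplex.moduleCat_exact_iff] at hexact
    obtain ⟨w, hw2⟩ := hexact e hpe
    refine ⟨ψ ((biprod.fst : biprod G F ⟶ G) w) + (biprod.snd : biprod G F ⟶ F) w, ?_⟩
    have e1 : e = β ((biprod.lift (𝟙 G) (-ψ)) ((biprod.fst : biprod G F ⟶ G) w)) +
        β ((biprod.inr : F ⟶ biprod G F)
          (ψ ((biprod.fst : biprod G F ⟶ G) w) + (biprod.snd : biprod G F ⟶ F) w)) := by
      rw [← map_add, hsplit w]
      exact hw2.symm
    have hc0 : cokernel.π (biprod.lift (𝟙 G) (-ψ) ≫ β)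
        (β ((biprod.lift (𝟙 G) (-ψ)) ((biprod.fst : biprod G F ⟶ G) w))) = 0 := by
      have hc := ConcreteCategory.congr_hom (cokernel.condition (biprod.lift (𝟙 G) (-ψ) ≫ β))
        ((biprod.fst : biprod G F ⟶ G) w)
      rw [capp, capp] at hc
      simpa using hc
    show (biprod.inr ≫ β ≫ cokernel.π (biprod.lift (𝟙 G) (-ψ) ≫ β))
      (ψ ((biprod.fst : biprod G F ⟶ G) w) + (biprod.snd : biprod G F ⟶ F) w) =
      cokernel.π (biprod.lift (𝟙 G) (-ψ) ≫ β) e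
    rw [capp, capp, e1]
    simp [hc0]
  · rw [ModuleCat.mono_iff_injective]
    rw [injective_iff_map_eq_zero]
    intro (x : F) hx
    replace hx : (biprod.inr ≫ β ≫ cokernel.π (biprod.lift (𝟙 G) (-ψ) ≫ β)) x = 0 := hx
    rw [capp, capp] at hx
    obtain ⟨g, hg⟩ := hker _ hx
    rw [capp] at hg
    have h4 : biprod.lift (𝟙 G) (-ψ) g = (biprod.inr : F ⟶ biprod G F) x := hβ hg
    have hg0 : g = 0 := by
      have h5 := congrArg (fun y => (biprod.fst : biprod G F ⟶ G) y) h4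
      have h6 := ConcreteCategory.congr_hom (biprod.lift_fst (𝟙 G) (-ψ)) g
      have h7 := ConcreteCategory.congr_hom (biprod.inr_fst (X := G) (Y := F)) x
      rw [capp] at h6 h7
      simp only [h6, h7] at h5
      simpa using h5
    have h8 := congrArg (fun y => (biprod.snd : biprod G F ⟶ F) y) h4
    have h9 := ConcreteCategory.congr_hom (biprod.lift_snd (𝟙 G) (-ψ)) g
    have h10 := ConcreteCategory.congr_hom (biprod.inr_snd (X := G) (Y := F)) x
    rw [capp] at h9 h10
    simp only [h9, h10] at h8
    rw [hg0] at h8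
    have h11 : x = (0 : F) := by simpa using h8.symm
    exact h11
  · show Epi (cokernel.desc _ p _)
    have : Epi p := hS.epi_g
    exact epi_of_epi_fac (cokernel.π_desc _ p _)

lemma extClass_pushoutComplex {G F E U : ModuleCat.{0} R} [HasExt.{0} (ModuleCat.{0} R)]
    (β : biprod G F ⟶ E) (p : E ⟶ U) (hw : β ≫ p = 0)
    (hS : (ShortComplex.mk β p hw).ShortExact) (ψ' : G ⟶ F)
    (h' : (pushoutComplex β p hw ψ').ShortExact) :
    h'.extClass = hS.extClass.comp (Ext.mk₀ (biprod.desc ψ' (𝟙 F))) (add_zero 1) := by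
  have hlift : biprod.lift (𝟙 G) (-ψ') = biprod.inl - ψ' ≫ biprod.inr := by
    apply biprod.hom_ext <;> simp
  have hcomm : biprod.desc ψ' (𝟙 F) ≫
      (biprod.inr ≫ β ≫ cokernel.π (biprod.lift (𝟙 G) (-ψ') ≫ β)) =
      β ≫ cokernel.π (biprod.lift (𝟙 G) (-ψ') ≫ β) := by
    have h1 : (biprod.inl - ψ' ≫ biprod.inr) ≫
        (β ≫ cokernel.π (biprod.lift (𝟙 G) (-ψ') ≫ β)) = 0 := by
      rw [← hlift]
      have h0 := cokernel.condition (biprod.lift (𝟙 G) (-ψ') ≫ β)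
      rw [Category.assoc] at h0
      exact h0
    rw [Preadditive.sub_comp, sub_eq_zero] at h1
    simp only [Category.assoc] at h1
    apply biprod.hom_ext'
    · simp only [biprod.inl_desc_assoc, Category.assoc]
      rw [← h1]
    · simp
  let φ : ShortComplex.mk β p hw ⟶ pushoutComplex β p hw ψ' :=
    { τ₁ := biprod.desc ψ' (𝟙 F)
      τ₂ := cokernel.π (biprod.lift (𝟙 G) (-ψ') ≫ β)
      τ₃ := 𝟙 U
      comm₁₂ := hcomm
      comm₂₃ := by simp [pushoutComplex] }
  have h := ShortComplex.ShortExact.extClass_naturality hS h' φ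
  dsimp only [φ] at h
  exact (Ext.mk₀_id_comp _).symm.trans h.symm

/-- module version of the extension lemma: with
`E_ψ = coker(β ∘ (id_G, −ψ))`, the sequence `0 → F → E_ψ → U → 0` is exact, and its
class `η(ψ) ∈ Ext^1_R(U, F)` satisfies `η(ψ) − η(0) = ψ_*(σ_G)`, where
`σ_G ∈ Ext^1_R(U, G)` is the `G`-component of the class of the given extension of
`U` by `G ⊕ F`. -/
theorem eta_sub_eta_zero [HasExt.{0} (ModuleCat.{0} R)] {G F E U : ModuleCat.{0} R}
    (β : biprod G F ⟶ E) (p : E ⟶ U) (hw : β ≫ p = 0)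
    (hS : (ShortComplex.mk β p hw).ShortExact) (ψ : G ⟶ F) :
    ∃ (hψ : (pushoutComplex β p hw ψ).ShortExact)
      (h0 : (pushoutComplex β p hw 0).ShortExact),
      Sub.sub (α := Ext U F 1) hψ.extClass h0.extClass =
        (hS.extClass.comp (Ext.mk₀ (biprod.fst : biprod G F ⟶ G))
          (add_zero 1)).comp (Ext.mk₀ ψ) (add_zero 1) := by
  have hψ := pushoutComplex_shortExact β p hw hS ψ
  have h0 := pushoutComplex_shortExact β p hw hS 0
  refine ⟨hψ, h0, ?_⟩
  rw [extClass_pushoutComplex β p hw hS ψ hψ, extClass_pushoutComplex β p hw hS 0 h0]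
  have hdesc : biprod.desc ψ (𝟙 F) = (biprod.fst ≫ ψ) + biprod.desc 0 (𝟙 F) := by
    apply biprod.hom_ext' <;> simp
  rw [hdesc, Ext.mk₀_add', Ext.comp_add]
  rw [Ext.comp_assoc_of_second_deg_zero, Ext.mk₀_comp_mk₀]
  exact add_sub_cancel_right _ _

end
end

section
/- Let k be a field of characteristic 0, R_n = k[x][t]/(t^n), R_{n-1} = R_n/(t^{n-1}). The kernel of the canonical surjection Ω_{R_n/k} ⊗_{R_n} R_{n-1} → Ω_{R_{n-1}/k} is the free R_{n-1}/(t)-module (i.e. k[x]-module) of rank 1 generated by the class of t^{n-2} dt. -/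
open Polynomial

/-- `R_n = k[x][t]/(t^n)`. -/
abbrev Rn (k : Type) [Field k] (n : ℕ) : Type := TruncP (Polynomial k) n

/-- `R_{n-1} = R_n/(t^{n-1})`. -/
abbrev Rm (k : Type) [Field k] (n : ℕ) : Type :=
  Rn k n ⧸ Ideal.span {tv (Polynomial k) n ^ (n-1)}

/-- `Ω_{R_n/k} ⊗_{R_n} R_{n-1}`, realized as `Ω_{R_n/k}/(t^{n-1}·Ω_{R_n/k})`. -/
abbrev OmegaRestr (k : Type) [Field k] (n : ℕ) : Type :=
  Ω[(Rn k n)⁄k] ⧸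
    (Ideal.span {tv (Polynomial k) n ^ (n-1)} •
      (⊤ : Submodule (Rn k n) (Ω[(Rn k n)⁄k])))

/-- The canonical surjection `Ω_{R_n/k} ⊗ R_{n-1} → Ω_{R_{n-1}/k}`. -/
noncomputable def canSurj (k : Type) [Field k] (n : ℕ) :
    OmegaRestr k n →ₗ[Rn k n] Ω[(Rm k n)⁄k] :=
  Submodule.liftQ _ (KaehlerDifferential.map k k (Rn k n) (Rm k n))
    (by
      rw [Submodule.smul_le]
      rintro r hr m -
      rw [LinearMap.mem_ker, map_smul]
      obtain ⟨c, rfl⟩ := Ideal.mem_span_singleton'.mp hr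
      letI inst : Module (Rm k n) Ω[(Rm k n)⁄k] :=
        instModuleKaehlerDifferentialOfSMulCommClass (R' := Rm k n) k (Rm k n)
      have h := algebraMap_smul (Rm k n) (c * tv (Polynomial k) n ^ (n-1))
        (KaehlerDifferential.map k k (Rn k n) (Rm k n) m)
      rw [map_mul, Ideal.Quotient.algebraMap_eq, Ideal.Quotient.eq_zero_iff_mem.mpr
          (Ideal.mem_span_singleton_self _)] at h
      rw [← h]
      exact (congrArg (fun x : Rm k n => x • KaehlerDifferential.map k k (Rn k n) (Rm k n) m)
        (mul_zero (Ideal.Quotient.mk _ c : Rm k n))).trans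
        (@zero_smul (Rm k n) _ _ _ (@MulActionWithZero.toSMulWithZero _ _ _ _
          (@Module.toMulActionWithZero _ _ _ _ inst)) (KaehlerDifferential.map k k (Rn k n) (Rm k n) m)))

/-- The class of `t^{n-2} dt` in `Ω_{R_n/k} ⊗ R_{n-1}`. -/
noncomputable def genClass (k : Type) [Field k] (n : ℕ) : OmegaRestr k n :=
  Submodule.Quotient.mk (tv (Polynomial k) n ^ (n-2) •
    KaehlerDifferential.D k (Rn k n) (tv (Polynomial k) n))

instance instTwoSidedRm (k : Type) [Field k] (n : ℕ) :
    (Ideal.span {tv (Polynomial k) n ^ (n-1)}).IsTwoSided := inferInstance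

set_option maxHeartbeats 1000000
set_option synthInstance.maxHeartbeats 1000000

section Aux

variable (k : Type) [Field k] (n : ℕ)

/-- The `d/dt` derivation on `k[x][t]` with values in `R_{n-1}`. -/
noncomputable def derB : Derivation k (Polynomial (Polynomial k)) (Rm k n) :=
  (Algebra.linearMap (Polynomial (Polynomial k)) (Rm k n)).compDer
    (Polynomial.derivative'.restrictScalars k)

lemma algebraMap_P_Rm (p : Polynomial (Polynomial k)) :
    algebraMap (Polynomial (Polynomial k)) (Rm k n) p =
      Ideal.Quotient.mk _
        (Ideal.Quotient.mk (Ideal.span {(X : Polynomial (Polynomial k)) ^ n}) p) := rfl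

lemma hkerL0 : (Ideal.span {(Polynomial.X : Polynomial (Polynomial k)) ^ n}).restrictScalars k ≤
    LinearMap.ker (derB k n).toLinearMap := by
  intro x hx
  obtain ⟨c, rfl⟩ := Ideal.mem_span_singleton'.mp hx
  have hX1 : algebraMap (Polynomial (Polynomial k)) (Rm k n) (X ^ (n-1)) = 0 := by
    rw [algebraMap_P_Rm]
    have : (Ideal.Quotient.mk (Ideal.span {(Polynomial.X : Polynomial (Polynomial k)) ^ n})
        (X ^ (n-1))) = tv (Polynomial k) n ^ (n-1) := by
      simp [tv, map_pow]
    rw [this, Ideal.Quotient.eq_zero_iff_mem]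
    exact Ideal.mem_span_singleton_self _
  have hX2 : algebraMap (Polynomial (Polynomial k)) (Rm k n) (X ^ n) = 0 := by
    rw [algebraMap_P_Rm,
      Ideal.Quotient.eq_zero_iff_mem.mpr (Ideal.mem_span_singleton_self _), map_zero]
  simp only [LinearMap.mem_ker]
  show algebraMap (Polynomial (Polynomial k)) (Rm k n) (derivative (c * X ^ n)) = 0
  rw [derivative_mul, derivative_X_pow, map_add, map_mul, map_mul, hX2, mul_zero,
    map_mul, hX1, mul_zero, mul_zero, add_zero]

/-- The `d/dt` map `R_n → R_{n-1}` as a `k`-linear map. -/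
noncomputable def deltaLin : Rn k n →ₗ[k] Rm k n :=
  (Submodule.liftQ _ (derB k n).toLinearMap (hkerL0 k n)).comp
    (Submodule.Quotient.restrictScalarsEquiv k
      (Ideal.span {(X : Polynomial (Polynomial k)) ^ n})).symm.toLinearMap

lemma deltaLin_mk (p : Polynomial (Polynomial k)) :
    deltaLin k n (Ideal.Quotient.mk _ p) =
      algebraMap (Polynomial (Polynomial k)) (Rm k n) (derivative p) := rfl

lemma algebraMap_Rn_Rm (p : Polynomial (Polynomial k)) :
    algebraMap (Rn k n) (Rm k n) (Ideal.Quotient.mk _ p) =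
      algebraMap (Polynomial (Polynomial k)) (Rm k n) p := rfl

/-- The `d/dt` derivation `R_n → R_{n-1}`. -/
noncomputable def delta : Derivation k (Rn k n) (Rm k n) where
  toLinearMap := deltaLin k n
  map_one_eq_zero' := by
    show deltaLin k n (Ideal.Quotient.mk _ (1 : Polynomial (Polynomial k))) = 0
    rw [deltaLin_mk, derivative_one, map_zero]
  leibniz' a b := by
    obtain ⟨p, rfl⟩ := Ideal.Quotient.mk_surjective a
    obtain ⟨q, rfl⟩ := Ideal.Quotient.mk_surjective b
    show deltaLin k n (Ideal.Quotient.mk _ p * Ideal.Quotient.mk _ q) = _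
    rw [← map_mul, deltaLin_mk, derivative_mul]
    show _ = Ideal.Quotient.mk _ p • deltaLin k n (Ideal.Quotient.mk _ q)
      + Ideal.Quotient.mk _ q • deltaLin k n (Ideal.Quotient.mk _ p)
    rw [deltaLin_mk, deltaLin_mk,
      Algebra.smul_def (Ideal.Quotient.mk _ p : Rn k n)
        (algebraMap (Polynomial (Polynomial k)) (Rm k n) (derivative q)),
      Algebra.smul_def (Ideal.Quotient.mk _ q : Rn k n)
        (algebraMap (Polynomial (Polynomial k)) (Rm k n) (derivative p)),
      algebraMap_Rn_Rm, algebraMap_Rn_Rm, map_add, map_mul, map_mul]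
    ring

lemma delta_tv : delta k n (tv (Polynomial k) n) = 1 := by
  show deltaLin k n (Ideal.Quotient.mk _ (X : Polynomial (Polynomial k))) = 1
  rw [deltaLin_mk, derivative_X, map_one]

end Aux

section Aux2

variable (k : Type) [Field k] (n : ℕ)

lemma htv : tv (Polynomial k) n = Ideal.Quotient.mk _ (X : Polynomial (Polynomial k)) := rfl

lemma ann_rev (hn : 3 ≤ n) (r : Rn k n) (hr : r ∈ Ideal.span {tv (Polynomial k) n}) :
    r • genClass k n = 0 := by
  obtain ⟨c, rfl⟩ := Ideal.mem_span_singleton'.mp hr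
  rw [genClass, ← Submodule.Quotient.mk_smul, Submodule.Quotient.mk_eq_zero]
  have e : (c * tv (Polynomial k) n) •
      (tv (Polynomial k) n ^ (n-2) • KaehlerDifferential.D k (Rn k n) (tv (Polynomial k) n)) =
      (c * tv (Polynomial k) n ^ (n-1)) • KaehlerDifferential.D k (Rn k n) (tv (Polynomial k) n) := by
    refine (smul_smul (α := Ω[(Rn k n)⁄k]) (c * tv (Polynomial k) n) _ _).trans ?_
    congr 1
    have : tv (Polynomial k) n * tv (Polynomial k) n ^ (n-2) = tv (Polynomial k) n ^ (n-1) := by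
      rw [← pow_succ']
      congr 1
      omega
    rw [mul_assoc, this]
  rw [e]
  exact Submodule.smul_mem_smul (Ideal.mul_mem_left _ c (Ideal.mem_span_singleton_self _))
    Submodule.mem_top

lemma ann_fwd (hn : 3 ≤ n) (r : Rn k n) (h : r • genClass k n = 0) :
    r ∈ Ideal.span {tv (Polynomial k) n} := by
  have hmem : r • (tv (Polynomial k) n ^ (n-2) •
      KaehlerDifferential.D k (Rn k n) (tv (Polynomial k) n)) ∈
      Ideal.span {tv (Polynomial k) n ^ (n-1)} •
        (⊤ : Submodule (Rn k n) (Ω[(Rn k n)⁄k])) := by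
    rw [genClass, ← Submodule.Quotient.mk_smul, Submodule.Quotient.mk_eq_zero] at h
    exact h
  have h2 : (delta k n).liftKaehlerDifferential (r • (tv (Polynomial k) n ^ (n-2) •
      KaehlerDifferential.D k (Rn k n) (tv (Polynomial k) n))) ∈
      Submodule.map (delta k n).liftKaehlerDifferential
        (Ideal.span {tv (Polynomial k) n ^ (n-1)} •
          (⊤ : Submodule (Rn k n) (Ω[(Rn k n)⁄k]))) :=
    Submodule.mem_map_of_mem hmem
  rw [Submodule.map_smul''] at h2
  have h4 : Ideal.span {tv (Polynomial k) n ^ (n-1)} •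
      (Submodule.map (delta k n).liftKaehlerDifferential
        (⊤ : Submodule (Rn k n) (Ω[(Rn k n)⁄k]))) = ⊥ := by
    rw [eq_bot_iff]
    refine Submodule.smul_le.mpr ?_
    intro a ha m _
    have e1 : a • m = algebraMap (Rn k n) (Rm k n) a * m := Algebra.smul_def a m
    have e2 : algebraMap (Rn k n) (Rm k n) a = 0 := Ideal.Quotient.eq_zero_iff_mem.mpr ha
    rw [e1, e2, zero_mul]
    exact Submodule.zero_mem ⊥
  rw [h4, Submodule.mem_bot] at h2
  have hφw : (delta k n).liftKaehlerDifferential (r • (tv (Polynomial k) n ^ (n-2) •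
      KaehlerDifferential.D k (Rn k n) (tv (Polynomial k) n))) =
      algebraMap (Rn k n) (Rm k n) (r * tv (Polynomial k) n ^ (n-2)) := by
    rw [map_smul, map_smul, Derivation.liftKaehlerDifferential_comp_D, delta_tv,
      ← mul_smul r (tv (Polynomial k) n ^ (n-2)) (1 : Rm k n),
      Algebra.smul_def (r * tv (Polynomial k) n ^ (n-2)) (1 : Rm k n), mul_one]
  rw [hφw] at h2
  have hin : r * tv (Polynomial k) n ^ (n-2) ∈ Ideal.span {tv (Polynomial k) n ^ (n-1)} :=
    Ideal.Quotient.eq_zero_iff_mem.mp h2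
  obtain ⟨p, rfl⟩ := Ideal.Quotient.mk_surjective r
  obtain ⟨c, hc⟩ := Ideal.mem_span_singleton'.mp hin
  obtain ⟨q, rfl⟩ := Ideal.Quotient.mk_surjective c
  have hc' : Ideal.Quotient.mk _ (q * X ^ (n-1) - p * X ^ (n-2)) = (0 : Rn k n) := by
    rw [map_sub, map_mul, map_mul, map_pow, map_pow, ← htv, sub_eq_zero]
    exact hc
  have hsub := Ideal.Quotient.eq_zero_iff_mem.mp hc'
  obtain ⟨s, hs⟩ := Ideal.mem_span_singleton'.mp hsub
  have e1 : (X : Polynomial (Polynomial k)) ^ (n-1) = X ^ (n-2) * X := by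
    rw [← pow_succ]; congr 1; omega
  have e2 : (X : Polynomial (Polynomial k)) ^ n = X ^ (n-2) * X ^ 2 := by
    rw [← pow_add]; congr 1; omega
  rw [e1, e2] at hs
  have hcancel : (X : Polynomial (Polynomial k)) ^ (n-2) * p =
      X ^ (n-2) * ((q - s * X) * X) := by linear_combination hs
  have hp : p = (q - s * X) * X :=
    mul_left_cancel₀ (pow_ne_zero (n-2) (X_ne_zero (R := Polynomial k))) hcancel
  refine Ideal.mem_span_singleton'.mpr ⟨Ideal.Quotient.mk _ (q - s * X), ?_⟩
  rw [htv, ← map_mul, ← hp]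

end Aux2

section Aux3

variable (k : Type) [Field k] (n : ℕ)

lemma hgker : tv (Polynomial k) n ^ (n-1) ∈
    RingHom.ker (algebraMap (Rn k n) (Rm k n)) := by
  rw [RingHom.mem_ker]
  exact Ideal.Quotient.eq_zero_iff_mem.mpr (Ideal.mem_span_singleton_self _)

lemma range_kct :
    LinearMap.range (KaehlerDifferential.kerCotangentToTensor k (Rn k n) (Rm k n)) =
      Submodule.span (Rn k n)
        {(1 : Rm k n) ⊗ₜ[Rn k n]
          KaehlerDifferential.D k (Rn k n) (tv (Polynomial k) n ^ (n-1))} := by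
  apply le_antisymm
  · rintro _ ⟨x, rfl⟩
    obtain ⟨⟨a, ha⟩, rfl⟩ := Ideal.toCotangent_surjective _ x
    have ha' : a ∈ Ideal.span {tv (Polynomial k) n ^ (n-1)} :=
      Ideal.Quotient.eq_zero_iff_mem.mp (RingHom.mem_ker.mp ha)
    obtain ⟨c, hc⟩ := Ideal.mem_span_singleton'.mp ha'
    have heq : (⟨a, ha⟩ : RingHom.ker (algebraMap (Rn k n) (Rm k n))) =
        c • ⟨tv (Polynomial k) n ^ (n-1), hgker k n⟩ := by
      ext
      simp only [SetLike.val_smul, smul_eq_mul]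
      exact hc.symm
    rw [heq, map_smul, map_smul, KaehlerDifferential.kerCotangentToTensor_toCotangent]
    exact Submodule.smul_mem _ _ (Submodule.mem_span_singleton_self _)
  · rw [Submodule.span_le, Set.singleton_subset_iff]
    exact ⟨Ideal.toCotangent _ ⟨_, hgker k n⟩,
      KaehlerDifferential.kerCotangentToTensor_toCotangent _ _ _ _⟩

variable [CharZero k]

lemma hunit (hn : 3 ≤ n) : IsUnit (((n-1 : ℕ) : Rn k n)) := by
  have h0 : ((n-1 : ℕ) : k) ≠ 0 := Nat.cast_ne_zero.mpr (by omega)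
  have e : ((n-1 : ℕ) : Rn k n) = algebraMap k (Rn k n) ((n-1 : ℕ) : k) := by
    rw [map_natCast]
  rw [e]
  exact (isUnit_iff_ne_zero.mpr h0).map _

lemma ker_canSurj (hn : 3 ≤ n) :
    LinearMap.ker (canSurj k n) = Submodule.span (Rn k n) {genClass k n} := by
  have hsurj : Function.Surjective (algebraMap (Rn k n) (Rm k n)) :=
    Ideal.Quotient.mk_surjective
  set eqv := TensorProduct.quotTensorEquivQuotSMul (Ω[(Rn k n)⁄k])
    (Ideal.span {tv (Polynomial k) n ^ (n-1)}) with heqv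
  have hcs : ∀ x : OmegaRestr k n, canSurj k n x =
      KaehlerDifferential.mapBaseChange k (Rn k n) (Rm k n) (eqv.symm x) := by
    intro x
    obtain ⟨w, rfl⟩ := Submodule.Quotient.mk_surjective _ x
    rw [canSurj, Submodule.liftQ_apply]
    have e1 : eqv.symm (Submodule.Quotient.mk w) = (1 : Rm k n) ⊗ₜ[Rn k n] w :=
      TensorProduct.quotTensorEquivQuotSMul_symm_mk _ _
    rw [e1, KaehlerDifferential.mapBaseChange_tmul]
    letI inst : Module (Rm k n) Ω[(Rm k n)⁄k] :=
      instModuleKaehlerDifferentialOfSMulCommClass (R' := Rm k n) k (Rm k n)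
    exact (one_smul (Rm k n) (KaehlerDifferential.map k k (Rn k n) (Rm k n) w)).symm
  have hDg : (Submodule.Quotient.mk (KaehlerDifferential.D k (Rn k n)
      (tv (Polynomial k) n ^ (n-1))) : OmegaRestr k n) =
      ((n-1 : ℕ) : Rn k n) • genClass k n := by
    rw [Derivation.leibniz_pow, show n - 1 - 1 = n - 2 by omega, genClass,
      Nat.cast_smul_eq_nsmul]
    exact map_nsmul ((Ideal.span {tv (Polynomial k) n ^ (n-1)} •
      (⊤ : Submodule (Rn k n) (Ω[(Rn k n)⁄k]))).mkQ) _ _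
  ext x
  rw [LinearMap.mem_ker, hcs x]
  constructor
  · intro hx
    have hker : eqv.symm x ∈ (LinearMap.ker (KaehlerDifferential.mapBaseChange k (Rn k n)
        (Rm k n))).restrictScalars (Rn k n) := by
      rw [Submodule.restrictScalars_mem, LinearMap.mem_ker]
      exact hx
    rw [← KaehlerDifferential.range_kerCotangentToTensor k (Rn k n) (Rm k n) hsurj,
      range_kct] at hker
    obtain ⟨c, hc⟩ := Submodule.mem_span_singleton.mp hker
    have hx2 : x = c • (Submodule.Quotient.mk (KaehlerDifferential.D k (Rn k n)
        (tv (Polynomial k) n ^ (n-1))) : OmegaRestr k n) := by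
      have h6 := congrArg eqv hc
      rw [LinearEquiv.apply_symm_apply, map_smul] at h6
      rw [← h6]
      congr 1
      rw [← TensorProduct.quotTensorEquivQuotSMul_symm_mk, LinearEquiv.apply_symm_apply]
    rw [hx2, hDg]
    exact Submodule.smul_mem _ _ (Submodule.smul_mem _ _ (Submodule.mem_span_singleton_self _))
  · intro hx
    obtain ⟨c, rfl⟩ := Submodule.mem_span_singleton.mp hx
    rw [map_smul, LinearMap.map_smul_of_tower]
    have e1 : eqv.symm (genClass k n) = (1 : Rm k n) ⊗ₜ[Rn k n]
        (tv (Polynomial k) n ^ (n-2) •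
          KaehlerDifferential.D k (Rn k n) (tv (Polynomial k) n)) :=
      TensorProduct.quotTensorEquivQuotSMul_symm_mk _ _
    rw [e1, KaehlerDifferential.mapBaseChange_tmul]
    letI inst : Module (Rm k n) Ω[(Rm k n)⁄k] :=
      instModuleKaehlerDifferentialOfSMulCommClass (R' := Rm k n) k (Rm k n)
    erw [one_smul (Rm k n) (KaehlerDifferential.map k k (Rn k n) (Rm k n)
      (tv (Polynomial k) n ^ (n-2) • KaehlerDifferential.D k (Rn k n) (tv (Polynomial k) n)))]
    rw [map_smul,
      KaehlerDifferential.map_D]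
    have hz : (algebraMap (Rn k n) (Rm k n) (tv (Polynomial k) n)) ^ (n-2) •
        KaehlerDifferential.D k (Rm k n) (algebraMap (Rn k n) (Rm k n)
          (tv (Polynomial k) n)) = 0 := by
      have h0 : KaehlerDifferential.D k (Rm k n)
          ((algebraMap (Rn k n) (Rm k n) (tv (Polynomial k) n)) ^ (n-1)) = 0 := by
        rw [← map_pow]
        have : algebraMap (Rn k n) (Rm k n) (tv (Polynomial k) n ^ (n-1)) = 0 :=
          RingHom.mem_ker.mp (hgker k n)
        rw [this, map_zero]
      rw [Derivation.leibniz_pow, show n - 1 - 1 = n - 2 by omega,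
        ← Nat.cast_smul_eq_nsmul k] at h0
      have h0k : ((n-1 : ℕ) : k) ≠ 0 := Nat.cast_ne_zero.mpr (by omega)
      exact (smul_eq_zero.mp h0).resolve_left h0k
    have h := algebraMap_smul (Rm k n) (tv (Polynomial k) n ^ (n-2))
      (KaehlerDifferential.D k (Rm k n) (algebraMap (Rn k n) (Rm k n) (tv (Polynomial k) n)))
    rw [map_pow, hz] at h
    erw [← h, smul_zero]
end Aux3

/-- the kernel of the canonical surjection
`Ω_{R_n/k} ⊗_{R_n} R_{n-1} → Ω_{R_{n-1}/k}` is the free `R_{n-1}/(t)`-module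
(i.e. `k[x]`-module) of rank one generated by the class of `t^{n-2} dt`:
it equals the span of this class, and the annihilator of the generator is
exactly `(t)`. -/
theorem kernel_of_canonical_surjection (k : Type) [Field k] [CharZero k]
    (n : ℕ) (hn : 3 ≤ n) :
    LinearMap.ker (canSurj k n) =
      Submodule.span (Rn k n) {genClass k n} ∧
    ∀ r : Rn k n,
      r • genClass k n = 0 ↔ r ∈ Ideal.span {tv (Polynomial k) n} := by
  exact ⟨ker_canSurj k n hn, fun r => ⟨ann_fwd k n hn r, ann_rev k n hn r⟩⟩
end
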